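/- arXiv:1903.03154 — 9 statements merged into one kernel-verified Lean document; each statement's English description precedes it below -/
import Mathlib

section
/- Let L ∈ ℝ^{q×n} with rows L₁,…,L_q and let b ∈ ℝ^q with bᵢ > 0 for all i. Suppose the polyhedron P = {u ∈ ℝ^n : Lᵢu ≤ bᵢ for all i} is bounded. Then there exists m > 0 such that for every u with Lᵢu < bᵢ for all i and every x ∈ ℝ^n, ∑_{i=1}^q (Lᵢx)²/(bᵢ − Lᵢu)² ≥ m‖x‖². (Equivalently, the gradient-recentered log-barrier over P is strongly convex on the interior of P.) -/
open RealInnerProductSpace Matrix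

/-- Lemma 2: for a bounded polyhedron `{u : Lu ≤ b}` with `b > 0`, the Hessian
`∑ᵢ LᵢᵀLᵢ/(bᵢ - Lᵢu)²` of the log-barrier is uniformly positive definite on the
interior: there is `m > 0` with `xᵀ∇²B(u)x ≥ m‖x‖²`. -/
theorem barrier_strongly_convex_of_bounded_polyhedron {n q : ℕ}
    (L : Matrix (Fin q) (Fin n) ℝ) (b : Fin q → ℝ) (hb : ∀ i, 0 < b i)
    (hbdd : Bornology.IsBounded
      {u : EuclideanSpace ℝ (Fin n) | ∀ i, L.mulVec u i ≤ b i}) :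
    ∃ m : ℝ, 0 < m ∧
      ∀ u : EuclideanSpace ℝ (Fin n), (∀ i, L.mulVec u i < b i) →
        ∀ x : EuclideanSpace ℝ (Fin n),
          m * ‖x‖ ^ 2 ≤ ∑ i, (L.mulVec x i) ^ 2 / (b i - L.mulVec u i) ^ 2 := by
  classical
  -- The linear map `x ↦ L x` between Euclidean spaces
  set T : EuclideanSpace ℝ (Fin n) →ₗ[ℝ] EuclideanSpace ℝ (Fin q) :=
    { toFun := fun x => WithLp.toLp 2 (L.mulVec x)
      map_add' := fun x y => by rw [WithLp.ofLp_add, Matrix.mulVec_add, WithLp.toLp_add]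
      map_smul' := fun c x => by rw [WithLp.ofLp_smul, Matrix.mulVec_smul, WithLp.toLp_smul]; rfl } with hTdef
  have hTapp : ∀ x : EuclideanSpace ℝ (Fin n), T x = L.mulVec x := fun _ => rfl
  -- A bound on the polyhedron
  obtain ⟨R, hR⟩ := isBounded_iff_forall_norm_le.1 hbdd
  have h0mem : (0 : EuclideanSpace ℝ (Fin n)) ∈
      {u : EuclideanSpace ℝ (Fin n) | ∀ i, L.mulVec u i ≤ b i} := by
    intro i
    simp [Matrix.mulVec_zero, (hb i).le]
  have hR0 : 0 ≤ R := le_trans (by simp) (hR 0 h0mem)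
  -- norm-squared identity
  have hnormsq : ∀ y : EuclideanSpace ℝ (Fin q), ‖y‖ ^ 2 = ∑ i, (y i) ^ 2 := by
    intro y
    have := PiLp.norm_sq_eq_of_L2 (fun _ : Fin q => ℝ) y
    simpa [sq_abs] using this
  -- coordinate bound
  have hcoord : ∀ (y : EuclideanSpace ℝ (Fin q)) (i : Fin q), |y i| ≤ ‖y‖ := by
    intro y i
    have h1 : (y i) ^ 2 ≤ ‖y‖ ^ 2 := by
      rw [hnormsq y]
      exact Finset.single_le_sum (fun j _ => sq_nonneg (y j)) (Finset.mem_univ i)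
    calc |y i| = Real.sqrt ((y i) ^ 2) := (Real.sqrt_sq_eq_abs _).symm
      _ ≤ Real.sqrt (‖y‖ ^ 2) := Real.sqrt_le_sqrt h1
      _ = ‖y‖ := Real.sqrt_sq (norm_nonneg _)
  -- T is injective since the polyhedron is bounded
  have hker : LinearMap.ker T = ⊥ := by
    rw [LinearMap.ker_eq_bot']
    intro x hx
    by_contra hx0
    have hxnorm : 0 < ‖x‖ := norm_pos_iff.2 hx0
    have hmul : L.mulVec x = 0 := by simpa [hTapp] using congrArg WithLp.ofLp hx
    set t : ℝ := (R + 1) / ‖x‖ with ht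
    have hmem : (t • x : EuclideanSpace ℝ (Fin n)) ∈
        {u : EuclideanSpace ℝ (Fin n) | ∀ i, L.mulVec u i ≤ b i} := by
      intro i
      have : L.mulVec (t • x) = t • L.mulVec x := Matrix.mulVec_smul L t x
      rw [show L.mulVec (t • x : EuclideanSpace ℝ (Fin n)) = t • L.mulVec x from
        by rw [WithLp.ofLp_smul]; exact Matrix.mulVec_smul L t x, hmul]
      simpa using (hb i).le
    have hle := hR _ hmem
    have ht0 : 0 ≤ t := div_nonneg (by linarith) hxnorm.le
    have : ‖(t • x : EuclideanSpace ℝ (Fin n))‖ = R + 1 := by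
      rw [norm_smul, Real.norm_eq_abs, abs_of_nonneg ht0, ht,
        div_mul_cancel₀ _ hxnorm.ne']
    linarith [hle, this ▸ hle]
  -- antilipschitz constant
  obtain ⟨K, hK0, hK⟩ := T.exists_antilipschitzWith hker
  have hKx : ∀ x : EuclideanSpace ℝ (Fin n), ‖x‖ ≤ (K : ℝ) * ‖T x‖ := by
    intro x
    simpa using hK.le_mul_norm (map_zero T) x
  -- operator norm bound for T (it is continuous in finite dimensions)
  set Tc : EuclideanSpace ℝ (Fin n) →L[ℝ] EuclideanSpace ℝ (Fin q) :=
    T.toContinuousLinearMap with hTc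
  set C : ℝ := (∑ i, b i) + ‖Tc‖ * R + 1 with hC
  have hC1 : 1 ≤ C := by
    have h1 : 0 ≤ ∑ i, b i := Finset.sum_nonneg fun i _ => (hb i).le
    have h2 : 0 ≤ ‖Tc‖ * R := mul_nonneg (norm_nonneg _) hR0
    simp [hC]; linarith
  have hCpos : 0 < C := lt_of_lt_of_le one_pos hC1
  refine ⟨1 / ((K : ℝ) ^ 2 * C ^ 2), by positivity, ?_⟩
  intro u hu x
  -- denominators are between 0 and C
  have hden : ∀ i, 0 < b i - L.mulVec u i ∧ b i - L.mulVec u i ≤ C := by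
    intro i
    constructor
    · linarith [hu i]
    · have humem : u ∈ {u : EuclideanSpace ℝ (Fin n) | ∀ i, L.mulVec u i ≤ b i} :=
        fun j => (hu j).le
      have hTu : ‖T u‖ ≤ ‖Tc‖ * R :=
        le_trans (Tc.le_opNorm u) (by
          exact mul_le_mul_of_nonneg_left (hR u humem) (norm_nonneg _))
      have hLu : |L.mulVec u i| ≤ ‖Tc‖ * R := le_trans (hcoord (T u) i) hTu
      have hbi : b i ≤ ∑ j, b j :=
        Finset.single_le_sum (fun j _ => (hb j).le) (Finset.mem_univ i)
      have := neg_abs_le (L.mulVec u i)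
      simp only [hC]
      linarith [abs_le.1 hLu]
  -- termwise bound
  have hterm : ∀ i, (L.mulVec x i) ^ 2 / C ^ 2 ≤
      (L.mulVec x i) ^ 2 / (b i - L.mulVec u i) ^ 2 := by
    intro i
    obtain ⟨h1, h2⟩ := hden i
    exact div_le_div_of_nonneg_left (sq_nonneg _) (by positivity)
      (pow_le_pow_left₀ h1.le h2 2)
  have hsum : (∑ i, (L.mulVec x i) ^ 2) / C ^ 2 ≤
      ∑ i, (L.mulVec x i) ^ 2 / (b i - L.mulVec u i) ^ 2 := by
    rw [Finset.sum_div]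
    exact Finset.sum_le_sum fun i _ => hterm i
  have hTx : ‖T x‖ ^ 2 = ∑ i, (L.mulVec x i) ^ 2 := hnormsq (T x)
  have hxTx : ‖x‖ ^ 2 ≤ (K : ℝ) ^ 2 * ‖T x‖ ^ 2 := by
    have := hKx x
    nlinarith [norm_nonneg x, norm_nonneg (T x), K.coe_nonneg]
  calc 1 / ((K : ℝ) ^ 2 * C ^ 2) * ‖x‖ ^ 2
      ≤ 1 / ((K : ℝ) ^ 2 * C ^ 2) * ((K : ℝ) ^ 2 * ‖T x‖ ^ 2) := by
        apply mul_le_mul_of_nonneg_left hxTx (by positivity)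
    _ = ‖T x‖ ^ 2 / C ^ 2 := by
        have hK0' : (0 : ℝ) < (K : ℝ) := hK0
        field_simp
    _ = (∑ i, (L.mulVec x i) ^ 2) / C ^ 2 := by rw [hTx]
    _ ≤ _ := hsum
end

section
/- Let H be a real symmetric positive-definite n×n matrix, μ > 0, m ≥ 0, and let Ω ⊆ ℝ^n be an open convex set. Let B : Ω → ℝ be differentiable with ⟨∇B(x) − ∇B(y), x − y⟩ ≥ m‖x − y‖² for all x, y ∈ Ω. Fix θ_x, θ_y ∈ ℝ^n and suppose U_x ∈ Ω minimizes u ↦ (1/2)⟨u, Hu⟩ − ⟨θ_x, u⟩ + μB(u) over Ω and U_y ∈ Ω minimizes u ↦ (1/2)⟨u, Hu⟩ − ⟨θ_y, u⟩ + μB(u) over Ω. Then ⟨U_x − U_y, (H + μmI)(U_x − U_y)⟩ ≤ ⟨U_x − U_y, θ_x − θ_y⟩; that is, the barrier-MPC map is slope-restricted on [0, (H + μmI)^{-1}]. -/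
open RealInnerProductSpace Matrix

lemma foc_aux {n : ℕ} (H : Matrix (Fin n) (Fin n) ℝ) (hHsym : H.IsSymm)
    (μ : ℝ) (Ω : Set (EuclideanSpace ℝ (Fin n))) (hΩopen : IsOpen Ω)
    (B : EuclideanSpace ℝ (Fin n) → ℝ)
    (hBdiff : ∀ u ∈ Ω, DifferentiableAt ℝ B u)
    (θ p : EuclideanSpace ℝ (Fin n)) (hp : p ∈ Ω)
    (hmin : ∀ u ∈ Ω,
      (1 / 2) * ⟪p, Matrix.toEuclideanLin H p⟫ - ⟪θ, p⟫ + μ * B p ≤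
        (1 / 2) * ⟪u, Matrix.toEuclideanLin H u⟫ - ⟪θ, u⟫ + μ * B u) :
    Matrix.toEuclideanLin H p - θ + μ • gradient B p = 0 := by
  set A : EuclideanSpace ℝ (Fin n) →L[ℝ] EuclideanSpace ℝ (Fin n) :=
    LinearMap.toContinuousLinearMap (Matrix.toEuclideanLin H) with hA
  have hAapp : ∀ v, A v = Matrix.toEuclideanLin H v := fun v => rfl
  set F : EuclideanSpace ℝ (Fin n) → ℝ :=
    fun u => (1 / 2) * ⟪u, (A u : EuclideanSpace ℝ (Fin n))⟫ - ⟪θ, u⟫ + μ * B u with hF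
  have hloc : IsLocalMin F p := by
    refine Filter.eventually_of_mem (hΩopen.mem_nhds hp) (fun u hu => ?_)
    simpa only [hF, hAapp] using hmin u hu
  have hf0 : fderiv ℝ F p = 0 := hloc.fderiv_eq_zero
  have hdq : DifferentiableAt ℝ
      (fun u : EuclideanSpace ℝ (Fin n) => ⟪u, (A u : EuclideanSpace ℝ (Fin n))⟫) p :=
    (differentiable_id.inner ℝ A.differentiable).differentiableAt
  have hdθ : DifferentiableAt ℝ (fun u : EuclideanSpace ℝ (Fin n) => ⟪θ, u⟫) p :=
    ((differentiable_const θ).inner ℝ differentiable_id).differentiableAt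
  have hdB := hBdiff p hp
  have hF' : HasFDerivAt F
      (((1 / 2 : ℝ) • fderiv ℝ
          (fun u : EuclideanSpace ℝ (Fin n) => ⟪u, (A u : EuclideanSpace ℝ (Fin n))⟫) p
        - fderiv ℝ (fun u : EuclideanSpace ℝ (Fin n) => ⟪θ, u⟫) p)
        + μ • fderiv ℝ B p) p :=
    ((hdq.hasFDerivAt.const_mul (1 / 2)).sub hdθ.hasFDerivAt).add (hdB.hasFDerivAt.const_mul μ)
  have key : ∀ v, ⟪Matrix.toEuclideanLin H p - θ + μ • gradient B p, v⟫ = 0 := by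
    intro v
    have h1 : fderiv ℝ F p v = 0 := by rw [hf0]; rfl
    rw [hF'.fderiv] at h1
    simp only [ContinuousLinearMap.add_apply, ContinuousLinearMap.sub_apply,
      ContinuousLinearMap.smul_apply, smul_eq_mul] at h1
    have hq : fderiv ℝ (fun u : EuclideanSpace ℝ (Fin n) =>
          ⟪u, (A u : EuclideanSpace ℝ (Fin n))⟫) p v
        = ⟪p, (A v : EuclideanSpace ℝ (Fin n))⟫ + ⟪v, (A p : EuclideanSpace ℝ (Fin n))⟫ := by
      rw [fderiv_inner_apply (𝕜 := ℝ) differentiableAt_fun_id A.differentiable.differentiableAt]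
      simp
    have hθ : fderiv ℝ (fun u : EuclideanSpace ℝ (Fin n) => ⟪θ, u⟫) p v = ⟪θ, v⟫ := by
      rw [fderiv_inner_apply (𝕜 := ℝ) (differentiableAt_const θ) differentiableAt_fun_id]
      simp
    have hBg : fderiv ℝ B p v = ⟪gradient B p, v⟫ := by
      rw [(hdB.hasGradientAt).hasFDerivAt.fderiv]; rfl
    have hsymA : ⟪p, (A v : EuclideanSpace ℝ (Fin n))⟫
        = ⟪(A p : EuclideanSpace ℝ (Fin n)), v⟫ := by
      have hherm : H.IsHermitian := by
        rw [Matrix.IsHermitian, Matrix.conjTranspose]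
        convert hHsym.eq using 1; ext i j; simp
      have hs := (Matrix.isHermitian_iff_isSymmetric.mp hherm)
      rw [hAapp, hAapp, ← hs p v]
    rw [hq, hθ, hBg, hsymA] at h1
    rw [inner_add_left, inner_sub_left, inner_smul_left]
    simp only [RCLike.star_def, conj_trivial]
    have := hAapp p
    rw [← this]
    linarith [real_inner_comm v (A p : EuclideanSpace ℝ (Fin n))]
  exact inner_self_eq_zero.mp (key _)

/-- Theorem 3: the barrier-MPC map is slope-restricted on `[0, (H + μmI)⁻¹]`:
if `U_x`, `U_y` minimize `(1/2)⟨u,Hu⟩ - ⟨θ_x,u⟩ + μB(u)` resp. `(1/2)⟨u,Hu⟩ - ⟨θ_y,u⟩ + μB(u)`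
over the open convex set `Ω`, where the gradient of `B` is `m`-strongly monotone on `Ω`, then
`⟨U_x - U_y, (H + μmI)(U_x - U_y)⟩ ≤ ⟨U_x - U_y, θ_x - θ_y⟩`. -/
theorem barrierMPC_slope_restricted {n : ℕ}
    (H : Matrix (Fin n) (Fin n) ℝ) (hH : H.PosDef) (hHsym : H.IsSymm)
    (μ m : ℝ) (hμ : 0 < μ) (hm : 0 ≤ m)
    (Ω : Set (EuclideanSpace ℝ (Fin n))) (hΩopen : IsOpen Ω) (hΩconv : Convex ℝ Ω)
    (B : EuclideanSpace ℝ (Fin n) → ℝ)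
    (hBdiff : ∀ u ∈ Ω, DifferentiableAt ℝ B u)
    (hBmono : ∀ x ∈ Ω, ∀ y ∈ Ω,
      m * ‖x - y‖ ^ 2 ≤ ⟪gradient B x - gradient B y, x - y⟫)
    (θx θy Ux Uy : EuclideanSpace ℝ (Fin n)) (hUx : Ux ∈ Ω) (hUy : Uy ∈ Ω)
    (hminx : ∀ u ∈ Ω,
      (1 / 2) * ⟪Ux, Matrix.toEuclideanLin H Ux⟫ - ⟪θx, Ux⟫ + μ * B Ux ≤
        (1 / 2) * ⟪u, Matrix.toEuclideanLin H u⟫ - ⟪θx, u⟫ + μ * B u)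
    (hminy : ∀ u ∈ Ω,
      (1 / 2) * ⟪Uy, Matrix.toEuclideanLin H Uy⟫ - ⟪θy, Uy⟫ + μ * B Uy ≤
        (1 / 2) * ⟪u, Matrix.toEuclideanLin H u⟫ - ⟪θy, u⟫ + μ * B u) :
    ⟪Ux - Uy, Matrix.toEuclideanLin
        (H + (μ * m) • (1 : Matrix (Fin n) (Fin n) ℝ)) (Ux - Uy)⟫ ≤
      ⟪Ux - Uy, θx - θy⟫ := by
  have focx := foc_aux H hHsym μ Ω hΩopen B hBdiff θx Ux hUx hminx
  have focy := foc_aux H hHsym μ Ω hΩopen B hBdiff θy Uy hUy hminy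
  set d : EuclideanSpace ℝ (Fin n) := Ux - Uy with hd
  have hsub : Matrix.toEuclideanLin H d - (θx - θy)
      + μ • (gradient B Ux - gradient B Uy) = 0 := by
    have h := congrArg₂ (· - ·) focx focy
    simp only [sub_zero] at h
    rw [hd, map_sub, smul_sub]
    rw [← h]
    abel
  -- inner with d
  have hinner : ⟪Matrix.toEuclideanLin H d, d⟫ - ⟪θx - θy, d⟫
      + μ * ⟪gradient B Ux - gradient B Uy, d⟫ = 0 := by
    have := congrArg (fun w => ⟪w, d⟫) hsub
    simpa [inner_add_left, inner_sub_left, inner_smul_left] using this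
  have hmon : μ * (m * ‖d‖ ^ 2) ≤ μ * ⟪gradient B Ux - gradient B Uy, d⟫ :=
    mul_le_mul_of_nonneg_left (hBmono Ux hUx Uy hUy) hμ.le
  -- expand LHS of goal
  have hexp : ⟪d, Matrix.toEuclideanLin
      (H + (μ * m) • (1 : Matrix (Fin n) (Fin n) ℝ)) d⟫
      = ⟪d, Matrix.toEuclideanLin H d⟫ + (μ * m) * ‖d‖ ^ 2 := by
    rw [map_add, _root_.map_smul]
    have h1 : Matrix.toEuclideanLin (1 : Matrix (Fin n) (Fin n) ℝ) d = d := by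
      simp [Matrix.toEuclideanLin_apply]
    rw [LinearMap.add_apply, LinearMap.smul_apply, h1, inner_add_right, inner_smul_right,
      real_inner_self_eq_norm_sq]
  rw [hexp]
  have hcomm := real_inner_comm d (Matrix.toEuclideanLin H d)
  have hcomm2 := real_inner_comm d (θx - θy)
  nlinarith [hinner, hmon]
end

section
/- Let H be a real symmetric positive-semidefinite n×n matrix, μ ≥ 0, and let Ω ⊆ ℝ^n be an open convex set. Let B : Ω → ℝ be differentiable and convex on Ω. Let θ_0, …, θ_N ∈ ℝ^n and suppose for each k that U_k ∈ Ω minimizes u ↦ (1/2)⟨u, Hu⟩ − ⟨θ_k, u⟩ + μB(u) over Ω. Then, with indices taken cyclically (θ_{N+1} = θ_0), ∑_{k=0}^{N} ⟨U_k, θ_k − θ_{k+1}⟩ ≥ 0; that is, the barrier-MPC map is cyclically monotone. -/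
open RealInnerProductSpace Matrix

/-- Theorem 4: the barrier-MPC map is cyclically monotone. If for each `k` the point `U k`
minimizes `(1/2)⟨u,Hu⟩ - ⟨θ k, u⟩ + μB(u)` over the open convex set `Ω`, with `H` symmetric
positive semidefinite, `μ ≥ 0` and `B` convex and differentiable on `Ω`, then
`∑ₖ ⟨U k, θ k - θ (k+1)⟩ ≥ 0` with cyclic indexing. -/
theorem barrierMPC_cyclically_monotone {n N : ℕ}
    (H : Matrix (Fin n) (Fin n) ℝ) (hH : H.PosSemidef)
    (μ : ℝ) (hμ : 0 ≤ μ)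
    (Ω : Set (EuclideanSpace ℝ (Fin n))) (hΩopen : IsOpen Ω) (hΩconv : Convex ℝ Ω)
    (B : EuclideanSpace ℝ (Fin n) → ℝ)
    (hBdiff : ∀ u ∈ Ω, DifferentiableAt ℝ B u)
    (hBconv : ConvexOn ℝ Ω B)
    (θ : Fin (N + 1) → EuclideanSpace ℝ (Fin n))
    (U : Fin (N + 1) → EuclideanSpace ℝ (Fin n))
    (hU : ∀ k, U k ∈ Ω)
    (hmin : ∀ k, ∀ u ∈ Ω,
      (1 / 2) * ⟪U k, Matrix.toEuclideanLin H (U k)⟫ - ⟪θ k, U k⟫ + μ * B (U k) ≤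
        (1 / 2) * ⟪u, Matrix.toEuclideanLin H u⟫ - ⟪θ k, u⟫ + μ * B u) :
    0 ≤ ∑ k : Fin (N + 1), ⟪U k, θ k - θ (k + 1)⟫ := by
  set F : Fin (N + 1) → ℝ := fun k =>
    (1 / 2) * ⟪U k, Matrix.toEuclideanLin H (U k)⟫ + μ * B (U k) with hF
  have key : ∀ k : Fin (N + 1),
      F k - F (k - 1) ≤ ⟪θ k, U k⟫ - ⟪θ k, U (k - 1)⟫ := by
    intro k
    have := hmin k (U (k - 1)) (hU (k - 1))
    simp only [hF]
    linarith
  have hsum := Finset.sum_le_sum (fun k (_ : k ∈ Finset.univ) => key k)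
  have hF0 : ∑ k : Fin (N + 1), F (k - 1) = ∑ k : Fin (N + 1), F k :=
    Fintype.sum_equiv (Equiv.subRight (1 : Fin (N + 1))) _ _ (fun k => rfl)
  rw [Finset.sum_sub_distrib, Finset.sum_sub_distrib, hF0, sub_self] at hsum
  have hre : ∑ k : Fin (N + 1), ⟪θ k, U (k - 1)⟫ =
      ∑ k : Fin (N + 1), ⟪θ (k + 1), U k⟫ :=
    Fintype.sum_equiv (Equiv.subRight (1 : Fin (N + 1))) _ _
      (fun k => by simp)
  calc (0 : ℝ) ≤ ∑ k : Fin (N + 1), ⟪θ k, U k⟫ - ∑ k : Fin (N + 1), ⟪θ k, U (k - 1)⟫ := hsum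
    _ = ∑ k : Fin (N + 1), ⟪U k, θ k - θ (k + 1)⟫ := by
        rw [hre, ← Finset.sum_sub_distrib]
        refine Finset.sum_congr rfl fun k _ => ?_
        rw [inner_sub_right, real_inner_comm (U k) (θ k), real_inner_comm (U k) (θ (k + 1))]
end

section
/- Let φ : ℝ^n → ℝ^n be cyclically monotone with φ(0) = 0, let θ : ℤ → ℝ^n be a finitely supported sequence (θ(t) = 0 for all but finitely many t), and let τ ∈ ℤ. Then ∑_{t ∈ ℤ} ⟨θ(t+τ), φ(θ(t))⟩ ≤ ∑_{t ∈ ℤ} ⟨θ(t), φ(θ(t))⟩. -/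
open RealInnerProductSpace

/-- A map `φ : ℝⁿ → ℝⁿ` is cyclically monotone if for every finite cyclic sequence
`x_0, …, x_N` with `x_{N+1} = x_0` one has `∑ₖ ⟨φ(x k), x k - x (k+1)⟩ ≥ 0`. -/
def CyclicallyMonotone {n : ℕ}
    (φ : EuclideanSpace ℝ (Fin n) → EuclideanSpace ℝ (Fin n)) : Prop :=
  ∀ (N : ℕ) (x : Fin (N + 1) → EuclideanSpace ℝ (Fin n)),
    0 ≤ ∑ k : Fin (N + 1), ⟪φ (x k), x k - x (k + 1)⟫

private lemma zf_inj (d K : ℕ) (τ : ℤ) (hτcase : τ = (d : ℤ) ∨ τ = -(d : ℤ)) :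
    ∀ p ∈ (Finset.range d) ×ˢ (Finset.range (2 * K + 1)),
      ∀ p' ∈ (Finset.range d) ×ˢ (Finset.range (2 * K + 1)),
        (p.1 : ℤ) + ((p.2 : ℤ) - (K : ℤ)) * τ = (p'.1 : ℤ) + ((p'.2 : ℤ) - (K : ℤ)) * τ →
          p = p' := by
  intro p hp p' hp' hpp
  simp only [Finset.mem_product, Finset.mem_range] at hp hp'
  have ha : (p.1 : ℤ) - (p'.1 : ℤ) = ((p'.2 : ℤ) - (p.2 : ℤ)) * τ := by linear_combination hpp
  set a : ℤ := (p'.2 : ℤ) - (p.2 : ℤ) with ha'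
  have hs1 : -(d : ℤ) < (p.1 : ℤ) - (p'.1 : ℤ) := by omega
  have hs2 : (p.1 : ℤ) - (p'.1 : ℤ) < (d : ℤ) := by omega
  have ha0 : a = 0 := by
    rcases lt_trichotomy a 0 with h | h | h
    · exfalso
      have h1 : a ≤ -1 := by omega
      rcases hτcase with hc | hc <;> rw [hc] at ha <;> nlinarith
    · exact h
    · exfalso
      have h1 : 1 ≤ a := by omega
      rcases hτcase with hc | hc <;> rw [hc] at ha <;> nlinarith
  have h2 : p.2 = p'.2 := by omega
  have h1 : p.1 = p'.1 := by rw [ha0, zero_mul] at ha; omega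
  exact Prod.ext h1 h2

private lemma zf_cov (d K M : ℕ) (τ : ℤ) (hτcase : τ = (d : ℤ) ∨ τ = -(d : ℤ))
    (hd1 : 1 ≤ d) (hK : K = M + 2) (t : ℤ) (htM : |t| ≤ (M : ℤ)) :
    ∃ p ∈ (Finset.range d) ×ˢ (Finset.range (2 * K + 1)),
      (p.1 : ℤ) + ((p.2 : ℤ) - (K : ℤ)) * τ = t := by
  have habst := abs_le.mp htM
  set q : ℤ := t / (d : ℤ) with hq
  set r : ℤ := t % (d : ℤ) with hr'
  have hdpos : (0 : ℤ) < (d : ℤ) := by exact_mod_cast hd1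
  have hr0 : 0 ≤ r := Int.emod_nonneg t (by omega)
  have hrd : r < (d : ℤ) := Int.emod_lt_of_pos t hdpos
  have htdq : (d : ℤ) * q + r = t := Int.mul_ediv_add_emod t (d : ℤ)
  have hqlb : -((M : ℤ) + 1) ≤ q := by nlinarith
  have hqub : q ≤ (M : ℤ) + 1 := by nlinarith
  rcases hτcase with hc | hc
  · refine ⟨(r.toNat, (q + (K : ℤ)).toNat), Finset.mem_product.2 ⟨?_, ?_⟩, ?_⟩
    · rw [Finset.mem_range]; omega
    · rw [Finset.mem_range]; omega
    · rw [Int.toNat_of_nonneg hr0, Int.toNat_of_nonneg (by omega), hc, ← htdq]; ring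
  · refine ⟨(r.toNat, ((K : ℤ) - q).toNat), Finset.mem_product.2 ⟨?_, ?_⟩, ?_⟩
    · rw [Finset.mem_range]; omega
    · rw [Finset.mem_range]; omega
    · rw [Int.toNat_of_nonneg hr0, Int.toNat_of_nonneg (by omega), hc, ← htdq]; ring

private lemma zf_top (d K M : ℕ) (r : ℕ) (τ : ℤ) (hd : (d : ℤ) = |τ|)
    (hd1 : 1 ≤ d) (hK : K = M + 2) (hr : r < d) :
    (M : ℤ) < |(r : ℤ) + (K : ℤ) * τ| := by
  have h2 : |(K : ℤ) * τ| - |(r : ℤ)| ≤ |(K : ℤ) * τ + (r : ℤ)| := by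
    have h := abs_sub_abs_le_abs_sub ((K : ℤ) * τ) (-(r : ℤ))
    rw [abs_neg, sub_neg_eq_add] at h
    exact h
  have h3 : |(K : ℤ) * τ| = (K : ℤ) * (d : ℤ) := by
    rw [abs_mul, abs_of_nonneg (by positivity : (0:ℤ) ≤ (K : ℤ)), ← hd]
  have h4 : |(r : ℤ)| = (r : ℤ) := abs_of_nonneg (by positivity)
  have hrd : (r : ℤ) < (d : ℤ) := by exact_mod_cast hr
  have hd1' : (1 : ℤ) ≤ (d : ℤ) := by exact_mod_cast hd1
  have hK' : (K : ℤ) = (M : ℤ) + 2 := by exact_mod_cast hK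
  have h5 : |(r : ℤ) + (K : ℤ) * τ| = |(K : ℤ) * τ + (r : ℤ)| := by ring_nf
  rw [h5]
  rw [h3, h4] at h2
  nlinarith

/-- Lemma 3 (first inequality): for a cyclically monotone `φ` with `φ(0) = 0` and a finitely
supported sequence `θ : ℤ → ℝⁿ`,
`∑ₜ ⟨θ(t+τ), φ(θ(t))⟩ ≤ ∑ₜ ⟨θ(t), φ(θ(t))⟩` for every shift `τ`. -/
theorem zames_falb_time_domain_inequality {n : ℕ}
    (φ : EuclideanSpace ℝ (Fin n) → EuclideanSpace ℝ (Fin n))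
    (hφ : CyclicallyMonotone φ) (hφ0 : φ 0 = 0)
    (θ : ℤ → EuclideanSpace ℝ (Fin n)) (hθ : (Function.support θ).Finite)
    (τ : ℤ) :
    ∑ᶠ t : ℤ, ⟪θ (t + τ), φ (θ t)⟫ ≤ ∑ᶠ t : ℤ, ⟪θ t, φ (θ t)⟫ := by
  classical
  rcases eq_or_ne τ 0 with rfl | hτ
  · simp
  obtain ⟨M, hM⟩ : ∃ M : ℕ, ∀ t : ℤ, θ t ≠ 0 → |t| ≤ (M : ℤ) := by
    obtain ⟨M, hMub⟩ := (hθ.image Int.natAbs).bddAbove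
    refine ⟨M, fun t ht => ?_⟩
    have h1 : t.natAbs ≤ M := hMub ⟨t, ht, rfl⟩
    rw [Int.abs_eq_natAbs]
    exact_mod_cast h1
  set d : ℕ := τ.natAbs with hd
  have hd1 : 1 ≤ d := Int.natAbs_pos.2 hτ
  have habs : ((d : ℕ) : ℤ) = |τ| := (Int.abs_eq_natAbs τ).symm
  have hτcase : τ = (d : ℤ) ∨ τ = -(d : ℤ) := Int.natAbs_eq τ
  set K : ℕ := M + 2 with hK
  set f : ℤ → ℝ := fun t => ⟪φ (θ t), θ t - θ (t + τ)⟫ with hf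
  set e : ℕ × ℕ → ℤ := fun p => (p.1 : ℤ) + ((p.2 : ℤ) - (K : ℤ)) * τ with he
  set T : Finset ℤ :=
    ((Finset.range d) ×ˢ (Finset.range (2 * K + 1))).image e with hT
  have hcov : ∀ t : ℤ, θ t ≠ 0 → t ∈ T := by
    intro t ht
    obtain ⟨p, hp, hpt⟩ := zf_cov d K M τ hτcase hd1 rfl t (hM t ht)
    exact Finset.mem_image.2 ⟨p, hp, hpt⟩
  have htop : ∀ r : ℕ, r < d → θ ((r : ℤ) + (K : ℤ) * τ) = 0 := by
    intro r hr
    by_contra h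
    exact absurd (hM _ h) (not_le.2 (zf_top d K M r τ habs hd1 rfl hr))
  have key : ∀ r : ℕ, r < d →
      0 ≤ ∑ j ∈ Finset.range (2 * K + 1), f ((r : ℤ) + ((j : ℤ) - (K : ℤ)) * τ) := by
    intro r hr
    have h0 := hφ (2 * K) (fun k => θ ((r : ℤ) + (((k : ℕ) : ℤ) - (K : ℤ)) * τ))
    rw [← Fin.sum_univ_eq_sum_range (fun j => f ((r : ℤ) + ((j : ℤ) - (K : ℤ)) * τ))]
    refine h0.trans_eq (Finset.sum_congr rfl fun k _ => ?_)
    by_cases hk : (k : ℕ) < 2 * K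
    · have hsucc : ((k + 1 : Fin (2 * K + 1)) : ℕ) = (k : ℕ) + 1 :=
        Fin.val_add_one_of_lt (by rw [Fin.lt_def, Fin.val_last]; exact hk)
      simp only [f, hsucc]
      congr 2
      push_cast
      ring
    · have hk' : (k : ℕ) = 2 * K := by have := k.isLt; omega
      have harg : (r : ℤ) + (((k : ℕ) : ℤ) - (K : ℤ)) * τ = (r : ℤ) + (K : ℤ) * τ := by
        rw [hk']; push_cast; ring
      have hz : θ ((r : ℤ) + (((k : ℕ) : ℤ) - (K : ℤ)) * τ) = 0 := by
        rw [harg]; exact htop r hr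
      simp only [f, hz, hφ0, inner_zero_left]
  have hsupg : Function.support (fun t : ℤ => ⟪θ (t + τ), φ (θ t)⟫) ⊆ ↑T := by
    intro t ht
    refine hcov t fun h0 => ht ?_
    simp only [Function.mem_support, not_not, h0, hφ0, inner_zero_right]
  have hsuph : Function.support (fun t : ℤ => ⟪θ t, φ (θ t)⟫) ⊆ ↑T := by
    intro t ht
    refine hcov t fun h0 => ht ?_
    simp only [Function.mem_support, not_not, h0, hφ0, inner_zero_right]
  rw [finsum_eq_sum_of_support_subset _ hsupg, finsum_eq_sum_of_support_subset _ hsuph,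
    ← sub_nonneg, ← Finset.sum_sub_distrib]
  have hterm : ∀ t ∈ T, ⟪θ t, φ (θ t)⟫ - ⟪θ (t + τ), φ (θ t)⟫ = f t := by
    intro t _
    simp only [f, inner_sub_right, real_inner_comm]
  rw [Finset.sum_congr rfl hterm, hT,
    Finset.sum_image (zf_inj d K τ hτcase), Finset.sum_product]
  exact Finset.sum_nonneg fun r hr => key r (Finset.mem_range.1 hr)
end

section
/- Let φ : ℝ^n → ℝ^n be cyclically monotone, odd (φ(−x) = −φ(x) for all x) with φ(0) = 0, let θ : ℤ → ℝ^n be a finitely supported sequence, and let τ ∈ ℤ. Then |∑_{t ∈ ℤ} ⟨θ(t+τ), φ(θ(t))⟩| ≤ ∑_{t ∈ ℤ} ⟨θ(t), φ(θ(t))⟩. -/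
open RealInnerProductSpace

lemma zf_key {n : ℕ}
    (φ : EuclideanSpace ℝ (Fin n) → EuclideanSpace ℝ (Fin n))
    (hφ : CyclicallyMonotone φ) (hφ0 : φ 0 = 0)
    (ψ : ℤ → EuclideanSpace ℝ (Fin n)) (hψ : (Function.support ψ).Finite)
    (τ : ℤ) (hτ : τ ≠ 0) :
    0 ≤ ∑ᶠ t : ℤ, ⟪φ (ψ t), ψ t - ψ (t + τ)⟫ := by
  set f : ℤ → ℝ := fun t => ⟪φ (ψ t), ψ t - ψ (t + τ)⟫ with hf
  -- bound on the support of ψ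
  obtain ⟨M, hM⟩ : ∃ M : ℕ, ∀ t : ℤ, (M : ℤ) ≤ |t| → ψ t = 0 := by
    refine ⟨(hψ.toFinset.sup fun t => t.natAbs) + 1, fun t ht => ?_⟩
    by_contra h
    have ht' : t ∈ hψ.toFinset := by simpa [Function.mem_support] using h
    have h3 : t.natAbs ≤ hψ.toFinset.sup fun t => t.natAbs :=
      Finset.le_sup (f := fun t : ℤ => t.natAbs) ht'
    have h2 : (t.natAbs : ℤ) = |t| := (Int.abs_eq_natAbs t).symm
    omega
  set d : ℕ := τ.natAbs with hdd
  have hd : 0 < d := Int.natAbs_pos.mpr hτ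
  have hdvdτ : (d : ℤ) ∣ τ := Int.natAbs_dvd.mpr dvd_rfl
  have hτdvd : τ ∣ (d : ℤ) := Int.dvd_natAbs.mpr dvd_rfl
  have habsτ : |τ| = (d : ℤ) := Int.abs_eq_natAbs τ
  set K : ℕ := M + d + 1 with hK
  -- each residue-class chain is nonnegative by cyclic monotonicity
  have hcycle : ∀ r : ℕ, r < d →
      0 ≤ ∑ k ∈ Finset.Icc (-(K:ℤ)) ((K:ℤ) - 1), f ((r:ℤ) + k * τ) := by
    intro r hr
    set x : Fin (2*K+1) → EuclideanSpace ℝ (Fin n) :=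
      fun j => ψ ((r:ℤ) + (((j:ℕ):ℤ) - (K:ℤ)) * τ) with hx
    have h0 := hφ (2*K) x
    set F : ℕ → ℝ := fun i => if i < 2*K then f ((r:ℤ) + ((i:ℤ) - (K:ℤ)) * τ) else 0 with hF
    have hterm : ∀ j : Fin (2*K+1), ⟪φ (x j), x j - x (j+1)⟫ = F (j:ℕ) := by
      intro j
      by_cases hj : (j:ℕ) < 2*K
      · have hj1 : ((j+1 : Fin (2*K+1)) : ℕ) = (j:ℕ) + 1 := by
          have : (j:ℕ) + 1 < 2*K + 1 := by omega
          simp [Fin.val_add_one_of_lt, Fin.lt_iff_val_lt_val, Fin.val_last, hj]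
        have hx1 : x (j+1) = ψ (((r:ℤ) + (((j:ℕ):ℤ) - (K:ℤ)) * τ) + τ) := by
          rw [hx]; simp only [hj1]; push_cast; ring
        rw [hF]; simp only [hj, if_true]
        rw [hf]
        simp only [hx]
        have he : ((r:ℤ) + ((((j+1 : Fin (2*K+1)):ℕ):ℤ) - (K:ℤ)) * τ)
            = ((r:ℤ) + (((j:ℕ):ℤ) - (K:ℤ)) * τ + τ) := by
          rw [hj1]; push_cast; ring
        rw [he]
      · have hj' : (j:ℕ) = 2*K := by omega
        have hx0 : x j = 0 := by
          have harg : (r:ℤ) + (((j:ℕ):ℤ) - (K:ℤ)) * τ = (r:ℤ) + (K:ℤ) * τ := by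
            rw [hj']; push_cast; ring
          rw [hx]
          show ψ ((r:ℤ) + (((j:ℕ):ℤ) - (K:ℤ)) * τ) = 0
          rw [harg]
          apply hM
          have hKd : (K:ℤ) ≤ (K:ℤ) * |τ| := le_mul_of_one_le_right (by positivity) (by omega)
          rcases lt_or_gt_of_ne hτ with h | h
          · have h1 : (K:ℤ) * |τ| = -((K:ℤ) * τ) := by rw [abs_of_neg h]; ring
            have h2 : (r:ℤ) + (K:ℤ) * τ ≤ -(M:ℤ) := by omega
            have h3 : |(r:ℤ) + (K:ℤ) * τ| = -((r:ℤ) + (K:ℤ) * τ) :=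
              abs_of_nonpos (by omega)
            omega
          · have h1 : (K:ℤ) * |τ| = (K:ℤ) * τ := by rw [abs_of_pos h]
            have h2 : (M:ℤ) ≤ (r:ℤ) + (K:ℤ) * τ := by omega
            have h3 : |(r:ℤ) + (K:ℤ) * τ| = (r:ℤ) + (K:ℤ) * τ :=
              abs_of_nonneg (by omega)
            omega
        rw [hx0, hφ0, hF]
        simp [hj]
    calc (0:ℝ) ≤ ∑ j : Fin (2*K+1), ⟪φ (x j), x j - x (j+1)⟫ := h0
      _ = ∑ j : Fin (2*K+1), F (j:ℕ) := by exact Finset.sum_congr rfl fun j _ => hterm j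
      _ = ∑ i ∈ Finset.range (2*K+1), F i := Fin.sum_univ_eq_sum_range F (2*K+1)
      _ = ∑ i ∈ Finset.range (2*K), f ((r:ℤ) + ((i:ℤ) - (K:ℤ)) * τ) := by
          rw [Finset.sum_range_succ]
          simp only [hF, lt_irrefl, if_neg (lt_irrefl (2*K)), add_zero]
          exact Finset.sum_congr rfl fun i hi => by
            rw [if_pos (Finset.mem_range.mp hi)]
      _ = ∑ k ∈ Finset.Icc (-(K:ℤ)) ((K:ℤ) - 1), f ((r:ℤ) + k * τ) := by
          have himg : Finset.Icc (-(K:ℤ)) ((K:ℤ)-1)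
              = (Finset.range (2*K)).image (fun i : ℕ => (i:ℤ) - K) := by
            ext k
            simp only [Finset.mem_Icc, Finset.mem_image, Finset.mem_range]
            constructor
            · rintro ⟨h1, h2⟩; exact ⟨(k + K).toNat, by omega, by omega⟩
            · rintro ⟨i, hi, rfl⟩; omega
          rw [himg, Finset.sum_image (by intro a _ b _ h; have h' : (a:ℤ) - K = (b:ℤ) - K := h; omega)]
  -- the block finset covering the support
  set T : Finset ℤ :=
    ((Finset.range d) ×ˢ (Finset.Icc (-(K:ℤ)) ((K:ℤ) - 1))).image
      (fun p : ℕ × ℤ => (p.1 : ℤ) + p.2 * τ) with hT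
  have hsupp : Function.support f ⊆ ↑T := by
    intro t ht
    have hψt : ψ t ≠ 0 := by
      intro h
      apply ht
      rw [hf]; simp [h, hφ0]
    have htM : |t| < (M:ℤ) := by
      by_contra h
      exact hψt (hM t (by omega))
    set r : ℤ := t % (d:ℤ) with hrd2
    have hr0 : 0 ≤ r := Int.emod_nonneg t (by exact_mod_cast hd.ne')
    have hrlt : r < (d:ℤ) := Int.emod_lt_of_pos t (by exact_mod_cast hd)
    have hdvd : τ ∣ (t - r) := hτdvd.trans (Int.dvd_self_sub_of_emod_eq rfl)
    set k : ℤ := (t - r) / τ with hk2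
    have hk : k * τ = t - r := Int.ediv_mul_cancel hdvd
    have hkb : |k| * (d:ℤ) = |t - r| := by
      rw [← hk, abs_mul, habsτ]
    have hkk : |k| ≤ |k| * (d:ℤ) := le_mul_of_one_le_right (abs_nonneg k) (by omega)
    have hkK : -(K:ℤ) ≤ k ∧ k ≤ (K:ℤ) - 1 := by
      have htr : |t - r| ≤ |t| + |r| := abs_sub t r
      have hrabs : |r| = r := abs_of_nonneg hr0
      have h1 : |t - r| < (M:ℤ) + d := by omega
      have h2 : |k| < (M:ℤ) + d := by omega
      have h3 := abs_lt.mp h2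
      exact ⟨by omega, by omega⟩
    simp only [hT, Finset.coe_image, Set.mem_image, Finset.mem_coe,
      Finset.mem_product, Finset.mem_range, Finset.mem_Icc]
    refine ⟨(r.toNat, k), ⟨by omega, hkK.1, hkK.2⟩, ?_⟩
    have htn : ((r.toNat : ℕ) : ℤ) = r := Int.toNat_of_nonneg hr0
    simp only [htn]
    linarith [hk]
  rw [finsum_eq_sum_of_support_subset f hsupp, hT,
    Finset.sum_image ?hinj, Finset.sum_product]
  case hinj =>
    rintro ⟨r1, k1⟩ hp ⟨r2, k2⟩ hq h
    simp only [Finset.mem_coe, Finset.mem_product, Finset.mem_range, Finset.mem_Icc] at hp hq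
    simp only at h
    have hdr : (d:ℤ) ∣ ((r1:ℤ) - r2) := by
      have he : (r1:ℤ) - r2 = (k2 - k1) * τ := by linear_combination h
      rw [he]
      exact Dvd.dvd.mul_left hdvdτ _
    have habs12 : |(r1:ℤ) - r2| < (d:ℤ) := abs_lt.mpr ⟨by omega, by omega⟩
    have hr12 : (r1:ℤ) = r2 := by
      have := Int.eq_zero_of_abs_lt_dvd hdr habs12
      omega
    have hk12 : k1 = k2 := by
      have h' : k1 * τ = k2 * τ := by linear_combination h - hr12
      exact mul_right_cancel₀ hτ h'
    simp only [Prod.mk.injEq]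
    exact ⟨by omega, hk12⟩
  exact Finset.sum_nonneg fun r hr => hcycle r (Finset.mem_range.mp hr)

/-- Lemma 3 (second inequality): for a cyclically monotone and odd `φ` with `φ(0) = 0` and a
finitely supported sequence `θ : ℤ → ℝⁿ`,
`|∑ₜ ⟨θ(t+τ), φ(θ(t))⟩| ≤ ∑ₜ ⟨θ(t), φ(θ(t))⟩` for every shift `τ`. -/
theorem zames_falb_time_domain_inequality_odd {n : ℕ}
    (φ : EuclideanSpace ℝ (Fin n) → EuclideanSpace ℝ (Fin n))
    (hφ : CyclicallyMonotone φ)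
    (hodd : ∀ x, φ (-x) = -φ x) (hφ0 : φ 0 = 0)
    (θ : ℤ → EuclideanSpace ℝ (Fin n)) (hθ : (Function.support θ).Finite)
    (τ : ℤ) :
    |∑ᶠ t : ℤ, ⟪θ (t + τ), φ (θ t)⟫| ≤ ∑ᶠ t : ℤ, ⟪θ t, φ (θ t)⟫ := by
  classical
  set s0 : Finset ℤ := hθ.toFinset with hs0
  have hsub : ∀ g : ℤ → ℝ, (∀ t, θ t = 0 → g t = 0) →
      ∑ᶠ t : ℤ, g t = ∑ t ∈ s0, g t := by
    intro g hg
    apply finsum_eq_sum_of_support_subset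
    intro t ht
    simp only [hs0, Finset.coe_sort_coe, Set.Finite.coe_toFinset, Function.mem_support]
    intro h
    exact ht (hg t h)
  have hA : ∀ x : EuclideanSpace ℝ (Fin n), 0 ≤ ⟪φ x, x⟫ := by
    intro x
    have h := hφ 1 ![x, 0]
    simpa [Fin.sum_univ_two, hφ0] using h
  have hS0 : ∑ᶠ t : ℤ, ⟪θ t, φ (θ t)⟫ = ∑ t ∈ s0, ⟪θ t, φ (θ t)⟫ :=
    hsub _ (fun t h => by simp [h, hφ0])
  have hSτ : ∑ᶠ t : ℤ, ⟪θ (t + τ), φ (θ t)⟫ = ∑ t ∈ s0, ⟪θ (t + τ), φ (θ t)⟫ :=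
    hsub _ (fun t h => by simp [h, hφ0])
  have hS0nn : 0 ≤ ∑ t ∈ s0, ⟪θ t, φ (θ t)⟫ :=
    Finset.sum_nonneg fun t _ => by rw [real_inner_comm]; exact hA (θ t)
  rcases eq_or_ne τ 0 with rfl | hτ
  · simp only [add_zero]
    rw [hS0, abs_of_nonneg hS0nn]
  · -- upper bound : S₀ - S_τ ≥ 0
    have h1 := zf_key φ hφ hφ0 θ hθ τ hτ
    have h1' : 0 ≤ ∑ t ∈ s0, ⟪φ (θ t), θ t - θ (t + τ)⟫ := by
      rw [← hsub _ (fun t h => by simp [h, hφ0])]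
      exact h1
    have hup : ∑ t ∈ s0, ⟪θ (t + τ), φ (θ t)⟫ ≤ ∑ t ∈ s0, ⟪θ t, φ (θ t)⟫ := by
      have he : ∀ t, ⟪φ (θ t), θ t - θ (t + τ)⟫
          = ⟪θ t, φ (θ t)⟫ - ⟪θ (t + τ), φ (θ t)⟫ := by
        intro t
        rw [inner_sub_right, real_inner_comm (φ (θ t)) (θ t),
          real_inner_comm (φ (θ t)) (θ (t + τ))]
      rw [Finset.sum_congr rfl (fun t _ => he t), Finset.sum_sub_distrib] at h1'
      linarith
    -- lower bound : S₀ + S_τ ≥ 0, via the alternating sign sequence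
    set sgn : ℤ → ℝ := fun t => (-1:ℝ)^(t/τ) with hsgndef
    have hsgn : ∀ t, sgn t = 1 ∨ sgn t = -1 := fun t =>
      (Int.even_or_odd (t/τ)).imp Even.neg_one_zpow Odd.neg_one_zpow
    have hshift : ∀ t, sgn (t + τ) = -sgn t := by
      intro t
      simp only [hsgndef]
      rw [show (t + τ)/τ = t/τ + 1 by simpa using Int.add_mul_ediv_right t 1 hτ,
        zpow_add_one₀ (by norm_num : (-1:ℝ) ≠ 0)]
      ring
    set ψ : ℤ → EuclideanSpace ℝ (Fin n) := fun t => sgn t • θ t with hψdef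
    have hψθ : ∀ t, θ t = 0 → ψ t = 0 := fun t h => by simp [hψdef, h]
    have hψfin : (Function.support ψ).Finite := by
      apply hθ.subset
      intro t ht
      simp only [Function.mem_support] at ht ⊢
      intro h
      exact ht (hψθ t h)
    have hφψ : ∀ t, φ (ψ t) = sgn t • φ (θ t) := by
      intro t
      rcases hsgn t with h | h
      · simp [hψdef, h]
      · simp only [hψdef, h, neg_one_smul]
        rw [hodd]
    have h2 := zf_key φ hφ hφ0 ψ hψfin τ hτ
    have h2' : 0 ≤ ∑ t ∈ s0, ⟪φ (ψ t), ψ t - ψ (t + τ)⟫ := by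
      rw [← hsub _ (fun t h => by simp [hψθ t h, hφ0])]
      exact h2
    have hterm2 : ∀ t, ⟪φ (ψ t), ψ t - ψ (t + τ)⟫
        = ⟪θ t, φ (θ t)⟫ + ⟪θ (t + τ), φ (θ t)⟫ := by
      intro t
      have hss : sgn t * sgn t = 1 := by rcases hsgn t with h | h <;> rw [h] <;> norm_num
      rw [hφψ]
      simp only [hψdef, hshift t]
      rw [inner_sub_right, real_inner_smul_left, real_inner_smul_left,
        real_inner_smul_right, neg_smul, inner_neg_right, real_inner_smul_right,
        real_inner_comm (φ (θ t)) (θ t), real_inner_comm (φ (θ t)) (θ (t + τ))]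
      linear_combination (⟪φ (θ t), θ t⟫ + ⟪φ (θ t), θ (t + τ)⟫) * hss
    have hlow : -(∑ t ∈ s0, ⟪θ t, φ (θ t)⟫) ≤ ∑ t ∈ s0, ⟪θ (t + τ), φ (θ t)⟫ := by
      rw [Finset.sum_congr rfl (fun t _ => hterm2 t), Finset.sum_add_distrib] at h2'
      linarith
    rw [hS0, hSτ, abs_le]
    exact ⟨hlow, hup⟩
end

section
/- Let H be a real symmetric positive-definite n×n matrix, μ > 0, and let B : ℝ^n → ℝ be differentiable and convex on ℝ^n. Fix θ ∈ ℝ^n and suppose U minimizes f(u) = (1/2)⟨u, Hu⟩ − ⟨θ, u⟩ + μB(u) over ℝ^n. Set θ' = θ + (I − H)U. Then U is the unique minimizer over ℝ^n of g(u) = (1/2)‖u‖² − ⟨θ', u⟩ + μB(u). -/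
open RealInnerProductSpace Matrix

/-- If `0 ≤ a + t * b` for all `t ∈ (0,1]`, then `0 ≤ a`. -/
lemma nonneg_of_forall_Ioc {a b : ℝ} (h : ∀ t : ℝ, 0 < t → t ≤ 1 → 0 ≤ a + t * b) :
    0 ≤ a := by
  by_contra hc
  push_neg at hc
  set t : ℝ := min 1 ((-a) / (2 * (|b| + 1))) with ht
  have hb1 : (0:ℝ) < |b| + 1 := by positivity
  have ht0 : 0 < t := by
    refine lt_min one_pos (div_pos (by linarith) (by positivity))
  have ht1 : t ≤ 1 := min_le_left _ _
  have ht2 : t ≤ (-a) / (2 * (|b| + 1)) := min_le_right _ _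
  have htb : t * b ≤ -a / 2 := by
    have h1 : t * b ≤ t * |b| := by
      have := le_abs_self b
      nlinarith
    have h2 : t * |b| ≤ ((-a) / (2 * (|b| + 1))) * (|b| + 1) := by
      have habs : (0:ℝ) ≤ |b| := abs_nonneg b
      nlinarith
    have h3 : ((-a) / (2 * (|b| + 1))) * (|b| + 1) = -a / 2 := by
      field_simp
    linarith
  have := h t ht0 ht1
  linarith

/-- Lemma 4 (equivalent feedback structure): if `U` minimizes
`(1/2)⟨u,Hu⟩ - ⟨θ,u⟩ + μB(u)` over `ℝⁿ` and `θ' = θ + (I - H)U`, then `U` is the unique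
minimizer of `(1/2)‖u‖² - ⟨θ',u⟩ + μB(u)` over `ℝⁿ`. -/
theorem barrierMPC_equivalent_feedback {n : ℕ}
    (H : Matrix (Fin n) (Fin n) ℝ) (hH : H.PosDef) (hHsym : H.IsSymm)
    (μ : ℝ) (hμ : 0 < μ)
    (B : EuclideanSpace ℝ (Fin n) → ℝ)
    (hBdiff : Differentiable ℝ B) (hBconv : ConvexOn ℝ Set.univ B)
    (θ U : EuclideanSpace ℝ (Fin n))
    (hmin : ∀ u : EuclideanSpace ℝ (Fin n),
      (1 / 2) * ⟪U, Matrix.toEuclideanLin H U⟫ - ⟪θ, U⟫ + μ * B U ≤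
        (1 / 2) * ⟪u, Matrix.toEuclideanLin H u⟫ - ⟪θ, u⟫ + μ * B u)
    (θ' : EuclideanSpace ℝ (Fin n))
    (hθ' : θ' = θ + Matrix.toEuclideanLin ((1 : Matrix (Fin n) (Fin n) ℝ) - H) U) :
    (∀ u : EuclideanSpace ℝ (Fin n),
        (1 / 2) * ‖U‖ ^ 2 - ⟪θ', U⟫ + μ * B U ≤ (1 / 2) * ‖u‖ ^ 2 - ⟪θ', u⟫ + μ * B u) ∧
      ∀ V : EuclideanSpace ℝ (Fin n),
        (∀ u : EuclideanSpace ℝ (Fin n),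
          (1 / 2) * ‖V‖ ^ 2 - ⟪θ', V⟫ + μ * B V ≤ (1 / 2) * ‖u‖ ^ 2 - ⟪θ', u⟫ + μ * B u) →
        V = U := by
  classical
  set L : EuclideanSpace ℝ (Fin n) →ₗ[ℝ] EuclideanSpace ℝ (Fin n) :=
    Matrix.toEuclideanLin H with hLdef
  have hsym : ∀ x y : EuclideanSpace ℝ (Fin n), ⟪L x, y⟫ = ⟪x, L y⟫ := fun x y =>
    (Matrix.isHermitian_iff_isSymmetric.mp hH.1) x y
  -- rewrite θ'
  have hone : Matrix.toEuclideanLin (1 : Matrix (Fin n) (Fin n) ℝ) U = U := by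
    simp [Matrix.toEuclideanLin_eq_toLin]
  have hθ2 : θ' = θ + (U - L U) := by
    rw [hθ', map_sub, LinearMap.sub_apply, hone]
  -- first-order condition (★)
  have star : ∀ u : EuclideanSpace ℝ (Fin n),
      0 ≤ ⟪L U - θ, u - U⟫ + (μ * B u - μ * B U) := by
    intro u
    set d : EuclideanSpace ℝ (Fin n) := u - U with hd
    apply nonneg_of_forall_Ioc (b := ⟪d, L d⟫ / 2)
    intro t ht0 ht1
    have hv := hmin (U + t • d)
    have hconv := hBconv.2 (Set.mem_univ U) (Set.mem_univ u)
      (by linarith : (0:ℝ) ≤ 1 - t) ht0.le (by ring)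
    have hvu : (1 - t) • U + t • u = U + t • d := by
      rw [hd]; module
    rw [hvu] at hconv
    -- expand the quadratic form
    have e1 : ⟪U + t • d, L (U + t • d)⟫ =
        ⟪U, L U⟫ + 2 * t * ⟪L U, d⟫ + t ^ 2 * ⟪d, L d⟫ := by
      rw [map_add, LinearMap.map_smul, inner_add_left, inner_add_right, inner_add_right,
        real_inner_smul_left, real_inner_smul_left, real_inner_smul_right,
        real_inner_smul_right, ← hsym U d, real_inner_comm d (L U)]
      ring
    have e2 : ⟪θ, U + t • d⟫ = ⟪θ, U⟫ + t * ⟪θ, d⟫ := by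
      rw [inner_add_right, real_inner_smul_right]
    rw [e1, e2] at hv
    have hBv : μ * B (U + t • d) ≤ μ * ((1 - t) * B U + t * B u) := by
      exact mul_le_mul_of_nonneg_left hconv hμ.le
    have hiLU : ⟪L U - θ, d⟫ = ⟪L U, d⟫ - ⟪θ, d⟫ := inner_sub_left _ _ _
    have ht' : 0 ≤ t * ((⟪L U - θ, d⟫ + (μ * B u - μ * B U)) + t * (⟪d, L d⟫ / 2)) := by
      rw [hiLU]
      nlinarith [hv, hBv]
    have h0 : t * 0 ≤ t * ((⟪L U - θ, d⟫ + (μ * B u - μ * B U)) + t * (⟪d, L d⟫ / 2)) := by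
      linarith [ht']
    exact le_of_mul_le_mul_left h0 ht0
  -- main inequality: for every u, g U ≤ g u, with slack (1/2)‖u - U‖²
  have main : ∀ u : EuclideanSpace ℝ (Fin n),
      (1 / 2) * ‖U‖ ^ 2 - ⟪θ', U⟫ + μ * B U + (1 / 2) * ‖u - U‖ ^ 2 ≤
        (1 / 2) * ‖u‖ ^ 2 - ⟪θ', u⟫ + μ * B u := by
    intro u
    have hstar := star u
    have hnorm : ‖u‖ ^ 2 = ‖U‖ ^ 2 + 2 * ⟪U, u - U⟫ + ‖u - U‖ ^ 2 := by
      have h := norm_add_sq_real U (u - U)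
      rw [show U + (u - U) = u by abel] at h
      exact h
    have hθu : ⟪θ', u⟫ = ⟪θ', U⟫ + ⟪θ', u - U⟫ := by
      rw [← inner_add_right]; congr 1; abel
    have hθd : ⟪θ', u - U⟫ = ⟪θ, u - U⟫ + ⟪U, u - U⟫ - ⟪L U, u - U⟫ := by
      rw [hθ2, inner_add_left, inner_sub_left]; ring
    have hiLU : ⟪L U - θ, u - U⟫ = ⟪L U, u - U⟫ - ⟪θ, u - U⟫ := inner_sub_left _ _ _
    have hsq : 0 ≤ ‖u - U‖ ^ 2 := sq_nonneg _
    rw [hnorm, hθu, hθd]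
    rw [hiLU] at hstar
    linarith
  constructor
  · intro u
    have := main u
    have hsq : 0 ≤ ‖u - U‖ ^ 2 := sq_nonneg _
    linarith
  · intro V hV
    have h1 := main V
    have h2 := hV U
    have h3 : ‖V - U‖ ^ 2 ≤ 0 := by linarith
    have h4 : V - U = 0 := by
      have := sq_nonneg ‖V - U‖
      have hn : ‖V - U‖ ^ 2 = 0 := le_antisymm h3 this
      have : ‖V - U‖ = 0 := by
        nlinarith [norm_nonneg (V - U)]
      exact norm_eq_zero.mp this
    have : V = U := by
      have := sub_eq_zero.mp h4
      exact this
    exact this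
end

section
/- Let V_1, …, V_N be pairwise orthogonal linear subspaces of ℝ^n whose direct sum is ℝ^n, with orthogonal projections P_1, …, P_N (so ∑_i P_i = I). Let μ > 0 and for each i let B_i : ℝ^n → ℝ be differentiable and convex with B_i(u) = B_i(P_i u) for all u (each barrier term depends only on the component of u in V_i). Let θ' ∈ ℝ^n. Then the unique minimizer U of (1/2)‖u‖² − ⟨θ', u⟩ + μ∑_i B_i(u) over ℝ^n satisfies U = ∑_{i=1}^{N} u_i, where u_i is the unique minimizer of (1/2)‖u‖² − ⟨θ', u⟩ + μB_i(u) over the subspace V_i; moreover u_i = P_i U for each i. -/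
open RealInnerProductSpace

lemma norm_sum_sq_of_orth {n N : ℕ} (v : Fin N → EuclideanSpace ℝ (Fin n))
    (h : ∀ i j, i ≠ j → ⟪v i, v j⟫ = (0:ℝ)) :
    ‖∑ i, v i‖ ^ 2 = ∑ i, ‖v i‖ ^ 2 := by
  calc ‖∑ i, v i‖ ^ 2 = ⟪∑ i, v i, ∑ j, v j⟫ := (real_inner_self_eq_norm_sq _).symm
    _ = ∑ i, ⟪v i, v i⟫ := by
        rw [inner_sum]
        refine Finset.sum_congr rfl fun i _ => ?_
        rw [sum_inner, Finset.sum_eq_single i (fun j _ hj => h j i hj) (by simp)]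
    _ = ∑ i, ‖v i‖ ^ 2 := Finset.sum_congr rfl fun i _ => real_inner_self_eq_norm_sq _

lemma unique_min_aux {n : ℕ} (K : Submodule ℝ (EuclideanSpace ℝ (Fin n)))
    (θ' : EuclideanSpace ℝ (Fin n)) (μ : ℝ) (hμ : 0 < μ)
    (g : EuclideanSpace ℝ (Fin n) → ℝ) (hg : ConvexOn ℝ Set.univ g)
    (a b : EuclideanSpace ℝ (Fin n)) (ha : a ∈ K) (hb : b ∈ K)
    (hmin : ∀ v ∈ K, (1/2)*‖a‖^2 - ⟪θ',a⟫ + μ * g a ≤ (1/2)*‖v‖^2 - ⟪θ',v⟫ + μ * g v)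
    (heq : (1/2)*‖a‖^2 - ⟪θ',a⟫ + μ * g a = (1/2)*‖b‖^2 - ⟪θ',b⟫ + μ * g b) :
    a = b := by
  set m := (1/2 : ℝ) • a + (1/2 : ℝ) • b with hm_def
  have hm : m ∈ K := K.add_mem (K.smul_mem _ ha) (K.smul_mem _ hb)
  have hgm : g m ≤ (1/2) * g a + (1/2) * g b :=
    hg.2 (Set.mem_univ a) (Set.mem_univ b) (by norm_num) (by norm_num) (by norm_num)
  have hgm' : μ * g m ≤ μ * ((1/2) * g a + (1/2) * g b) :=
    mul_le_mul_of_nonneg_left hgm hμ.le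
  have hm2 : ‖m‖^2 = (1/4)*‖a‖^2 + (1/2)*⟪a,b⟫ + (1/4)*‖b‖^2 := by
    have key : (⟪m,m⟫:ℝ) = (1/4)*⟪a,a⟫ + (1/2)*⟪a,b⟫ + (1/4)*⟪b,b⟫ := by
      rw [hm_def, real_inner_add_add_self, real_inner_smul_left, real_inner_smul_right,
        real_inner_smul_left, real_inner_smul_right, real_inner_smul_left,
        real_inner_smul_right]
      ring
    rw [← real_inner_self_eq_norm_sq, ← real_inner_self_eq_norm_sq,
      ← real_inner_self_eq_norm_sq, key]
  have hab : ‖a - b‖^2 = ‖a‖^2 - 2*⟪a,b⟫ + ‖b‖^2 := by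
    rw [norm_sub_sq_real]
  have hinner : ⟪θ', m⟫ = (1/2)*⟪θ',a⟫ + (1/2)*⟪θ',b⟫ := by
    rw [hm_def, inner_add_right, real_inner_smul_right, real_inner_smul_right]
  have h1 : ‖a - b‖^2 ≤ 0 := by
    linarith [hmin m hm, hgm', hm2, hab, hinner, heq]
  have h2 : ‖a - b‖ = 0 := by nlinarith [norm_nonneg (a - b)]
  have h3 : a - b = 0 := norm_eq_zero.1 h2
  exact sub_eq_zero.1 h3

/-- Lemmas 5 and 7 (decomposition into parallel convex programs): if `ℝⁿ` is the orthogonal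
direct sum of pairwise orthogonal subspaces `V i` with orthogonal projections `P i`
(so `∑ i, P i = I`), and each barrier term `B i` depends only on the component in `V i`,
then the unique minimizer `U` of `(1/2)‖u‖² - ⟨θ',u⟩ + μ∑ᵢ Bᵢ(u)` over `ℝⁿ` equals `∑ i, u i`,
where `u i` is the minimizer of `(1/2)‖u‖² - ⟨θ',u⟩ + μBᵢ(u)` over the subspace `V i`;
moreover `u i = P i U` for every `i`. -/
theorem barrierMPC_parallel_decomposition {n N : ℕ}
    (V : Fin N → Submodule ℝ (EuclideanSpace ℝ (Fin n)))
    (horth : ∀ i j, i ≠ j → ∀ x ∈ V i, ∀ y ∈ V j, ⟪x, y⟫ = (0 : ℝ))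
    (hspan : (⨆ i, V i) = ⊤)
    (hsum : ∀ w : EuclideanSpace ℝ (Fin n),
      ∑ i, (Submodule.orthogonalProjectionOnto (V i) w : EuclideanSpace ℝ (Fin n)) = w)
    (μ : ℝ) (hμ : 0 < μ)
    (B : Fin N → EuclideanSpace ℝ (Fin n) → ℝ)
    (hBdiff : ∀ i, Differentiable ℝ (B i))
    (hBconv : ∀ i, ConvexOn ℝ Set.univ (B i))
    (hBdep : ∀ i u, B i u = B i (Submodule.orthogonalProjectionOnto (V i) u))
    (θ' U : EuclideanSpace ℝ (Fin n))
    (hUmin : ∀ w : EuclideanSpace ℝ (Fin n),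
      (1 / 2) * ‖U‖ ^ 2 - ⟪θ', U⟫ + μ * ∑ i, B i U ≤
        (1 / 2) * ‖w‖ ^ 2 - ⟪θ', w⟫ + μ * ∑ i, B i w)
    (u : Fin N → EuclideanSpace ℝ (Fin n))
    (hu : ∀ i, u i ∈ V i)
    (humin : ∀ i, ∀ v ∈ V i,
      (1 / 2) * ‖u i‖ ^ 2 - ⟪θ', u i⟫ + μ * B i (u i) ≤
        (1 / 2) * ‖v‖ ^ 2 - ⟪θ', v⟫ + μ * B i v) :
    U = ∑ i, u i ∧
      ∀ i, u i = (Submodule.orthogonalProjectionOnto (V i) U : EuclideanSpace ℝ (Fin n)) := by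
  classical
  -- projection of an element of another subspace is zero
  have hPz : ∀ i j, i ≠ j → ∀ x ∈ V j,
      (Submodule.orthogonalProjectionOnto (V i) x : EuclideanSpace ℝ (Fin n)) = 0 := by
    intro i j hij x hx
    have hx' : x ∈ (V i)ᗮ := by
      rw [Submodule.mem_orthogonal]
      intro y hy
      exact horth i j hij y hy x hx
    rw [Submodule.orthogonalProjectionOnto_apply_of_mem_orthogonal hx']
    rfl
  have hPself : ∀ i, ∀ x ∈ V i,
      (Submodule.orthogonalProjectionOnto (V i) x : EuclideanSpace ℝ (Fin n)) = x := by
    intro i x hx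
    exact Submodule.starProjection_eq_self_iff.2 hx
  -- projection of the sum of the u's
  have hPu : ∀ i, (Submodule.orthogonalProjectionOnto (V i) (∑ j, u j) : EuclideanSpace ℝ (Fin n)) = u i := by
    intro i
    rw [map_sum]
    push_cast
    rw [Finset.sum_eq_single i (fun j _ hj => hPz i j (Ne.symm hj) (u j) (hu j)) (by simp)]
    exact hPself i (u i) (hu i)
  -- value of the full objective at ∑ u
  have hFsum : (1/2) * ‖∑ i, u i‖^2 - ⟪θ', ∑ i, u i⟫ + μ * ∑ i, B i (∑ j, u j)
      = ∑ i, ((1/2) * ‖u i‖^2 - ⟪θ', u i⟫ + μ * B i (u i)) := by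
    rw [norm_sum_sq_of_orth u (fun i j hij => horth i j hij (u i) (hu i) (u j) (hu j)),
      inner_sum]
    have hB : ∀ i, B i (∑ j, u j) = B i (u i) := by
      intro i; rw [hBdep i (∑ j, u j), hPu i]
    rw [Finset.sum_congr rfl (fun i _ => hB i), Finset.mul_sum, Finset.mul_sum,
      ← Finset.sum_sub_distrib, ← Finset.sum_add_distrib]
  -- value of the full objective at U
  have hFU : (1/2) * ‖U‖^2 - ⟪θ', U⟫ + μ * ∑ i, B i U
      = ∑ i, ((1/2) * ‖(Submodule.orthogonalProjectionOnto (V i) U : EuclideanSpace ℝ (Fin n))‖^2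
          - ⟪θ', (Submodule.orthogonalProjectionOnto (V i) U : EuclideanSpace ℝ (Fin n))⟫
          + μ * B i (Submodule.orthogonalProjectionOnto (V i) U : EuclideanSpace ℝ (Fin n))) := by
    have horthP : ∀ i j, i ≠ j →
        ⟪(Submodule.orthogonalProjectionOnto (V i) U : EuclideanSpace ℝ (Fin n)),
          (Submodule.orthogonalProjectionOnto (V j) U : EuclideanSpace ℝ (Fin n))⟫ = (0:ℝ) :=
      fun i j hij => horth i j hij _ (Submodule.orthogonalProjectionOnto (V i) U).2 _
        (Submodule.orthogonalProjectionOnto (V j) U).2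
    have hnorm := norm_sum_sq_of_orth
      (fun i => (Submodule.orthogonalProjectionOnto (V i) U : EuclideanSpace ℝ (Fin n))) horthP
    rw [hsum U] at hnorm
    have hi : (⟪θ', U⟫:ℝ)
        = ∑ i, ⟪θ', (Submodule.orthogonalProjectionOnto (V i) U : EuclideanSpace ℝ (Fin n))⟫ := by
      conv_lhs => rw [← hsum U]
      rw [inner_sum]
    have hB : ∀ i, B i U = B i (Submodule.orthogonalProjectionOnto (V i) U : EuclideanSpace ℝ (Fin n)) :=
      fun i => hBdep i U
    rw [hnorm, hi, Finset.sum_congr rfl (fun i _ => hB i), Finset.mul_sum, Finset.mul_sum,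
      ← Finset.sum_sub_distrib, ← Finset.sum_add_distrib]
  -- chain of inequalities
  have hterm : ∀ i, (1/2) * ‖u i‖^2 - ⟪θ', u i⟫ + μ * B i (u i)
      ≤ (1/2) * ‖(Submodule.orthogonalProjectionOnto (V i) U : EuclideanSpace ℝ (Fin n))‖^2
        - ⟪θ', (Submodule.orthogonalProjectionOnto (V i) U : EuclideanSpace ℝ (Fin n))⟫
        + μ * B i (Submodule.orthogonalProjectionOnto (V i) U : EuclideanSpace ℝ (Fin n)) :=
    fun i => humin i _ (Submodule.orthogonalProjectionOnto (V i) U).2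
  have hchain : ∑ i, ((1/2) * ‖(Submodule.orthogonalProjectionOnto (V i) U : EuclideanSpace ℝ (Fin n))‖^2
        - ⟪θ', (Submodule.orthogonalProjectionOnto (V i) U : EuclideanSpace ℝ (Fin n))⟫
        + μ * B i (Submodule.orthogonalProjectionOnto (V i) U : EuclideanSpace ℝ (Fin n)))
      ≤ ∑ i, ((1/2) * ‖u i‖^2 - ⟪θ', u i⟫ + μ * B i (u i)) := by
    rw [← hFU, ← hFsum]
    exact hUmin (∑ i, u i)
  have heqterm : ∀ i, (1/2) * ‖u i‖^2 - ⟪θ', u i⟫ + μ * B i (u i)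
      = (1/2) * ‖(Submodule.orthogonalProjectionOnto (V i) U : EuclideanSpace ℝ (Fin n))‖^2
        - ⟪θ', (Submodule.orthogonalProjectionOnto (V i) U : EuclideanSpace ℝ (Fin n))⟫
        + μ * B i (Submodule.orthogonalProjectionOnto (V i) U : EuclideanSpace ℝ (Fin n)) := by
    intro i
    by_contra hne
    have hlt : (1/2) * ‖u i‖^2 - ⟪θ', u i⟫ + μ * B i (u i)
        < (1/2) * ‖(Submodule.orthogonalProjectionOnto (V i) U : EuclideanSpace ℝ (Fin n))‖^2
          - ⟪θ', (Submodule.orthogonalProjectionOnto (V i) U : EuclideanSpace ℝ (Fin n))⟫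
          + μ * B i (Submodule.orthogonalProjectionOnto (V i) U : EuclideanSpace ℝ (Fin n)) :=
      lt_of_le_of_ne (hterm i) hne
    have := Finset.sum_lt_sum (fun j _ => hterm j) ⟨i, Finset.mem_univ i, hlt⟩
    linarith
  -- uniqueness on each subspace
  have hui : ∀ i, u i = (Submodule.orthogonalProjectionOnto (V i) U : EuclideanSpace ℝ (Fin n)) := by
    intro i
    exact unique_min_aux (V i) θ' μ hμ (B i) (hBconv i) (u i) _ (hu i)
      (Submodule.orthogonalProjectionOnto (V i) U).2 (humin i) (heqterm i)
  refine ⟨?_, hui⟩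
  rw [← hsum U]
  exact Finset.sum_congr rfl fun i _ => (hui i).symm
end

section
/- Let b̄_i > 0 and b̲_i > 0 for i = 1, …, n, and consider the open box Ω = {u ∈ ℝ^n : −b̲_i < u_i < b̄_i for all i}. Set m = min_i 8/(b̄_i + b̲_i)². Then for every u ∈ Ω and every x ∈ ℝ^n, ∑_{i=1}^{n} x_i² (1/(b̄_i − u_i)² + 1/(b̲_i + u_i)²) ≥ m‖x‖², and the constant m is optimal: there exist u ∈ Ω and a unit vector x achieving equality. -/
lemma box_barrier_key {a b : ℝ} (ha : 0 < a) (hb : 0 < b) :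
    8 / (a + b) ^ 2 ≤ 1 / a ^ 2 + 1 / b ^ 2 := by
  rw [div_add_div _ _ (by positivity) (by positivity),
    div_le_div_iff₀ (by positivity) (by positivity)]
  nlinarith [sq_nonneg (a - b), sq_nonneg (a * b), mul_pos ha hb, sq_nonneg (a*a - b*b)]

/-- Appendix A: on the open box `{u : -b̲ᵢ < uᵢ < b̄ᵢ}`, the Hessian quadratic form of the
log-barrier satisfies `∑ᵢ xᵢ²(1/(b̄ᵢ-uᵢ)² + 1/(b̲ᵢ+uᵢ)²) ≥ m‖x‖²` with
`m = minᵢ 8/(b̄ᵢ+b̲ᵢ)²`, and this constant is attained by some `u` in the box and some unit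
vector `x`. -/
theorem box_barrier_strong_convexity_constant {n : ℕ} (hn : 0 < n)
    (bU bL : Fin n → ℝ) (hbU : ∀ i, 0 < bU i) (hbL : ∀ i, 0 < bL i) :
    (∀ u : EuclideanSpace ℝ (Fin n), (∀ i, -bL i < u i ∧ u i < bU i) →
      ∀ x : EuclideanSpace ℝ (Fin n),
        (⨅ i, 8 / (bU i + bL i) ^ 2) * ‖x‖ ^ 2 ≤
          ∑ i, (x i) ^ 2 * (1 / (bU i - u i) ^ 2 + 1 / (bL i + u i) ^ 2)) ∧
    ∃ u : EuclideanSpace ℝ (Fin n), (∀ i, -bL i < u i ∧ u i < bU i) ∧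
      ∃ x : EuclideanSpace ℝ (Fin n), ‖x‖ = 1 ∧
        ∑ i, (x i) ^ 2 * (1 / (bU i - u i) ^ 2 + 1 / (bL i + u i) ^ 2) =
          ⨅ i, 8 / (bU i + bL i) ^ 2 := by
  have hinst : Nonempty (Fin n) := ⟨⟨0, hn⟩⟩
  have hbdd : BddBelow (Set.range fun i => 8 / (bU i + bL i) ^ 2) :=
    (Set.finite_range _).bddBelow
  constructor
  · intro u hu x
    have hxnorm : ‖x‖ ^ 2 = ∑ i, (x i) ^ 2 := by
      rw [EuclideanSpace.norm_eq, Real.sq_sqrt (by positivity)]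
      congr 1; funext i; rw [Real.norm_eq_abs, sq_abs]
    rw [hxnorm, Finset.mul_sum]
    apply Finset.sum_le_sum
    intro i _
    have h1 : (⨅ i, 8 / (bU i + bL i) ^ 2) ≤ 8 / (bU i + bL i) ^ 2 := ciInf_le hbdd i
    have h2 : 8 / (bU i + bL i) ^ 2 ≤ 1 / (bU i - u i) ^ 2 + 1 / (bL i + u i) ^ 2 := by
      have := box_barrier_key (a := bU i - u i) (b := bL i + u i)
        (by linarith [(hu i).2]) (by linarith [(hu i).1])
      have hab : bU i - u i + (bL i + u i) = bU i + bL i := by ring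
      rwa [hab] at this
    calc (⨅ i, 8 / (bU i + bL i) ^ 2) * x i ^ 2
        ≤ (1 / (bU i - u i) ^ 2 + 1 / (bL i + u i) ^ 2) * x i ^ 2 :=
          mul_le_mul_of_nonneg_right (h1.trans h2) (sq_nonneg _)
      _ = x i ^ 2 * (1 / (bU i - u i) ^ 2 + 1 / (bL i + u i) ^ 2) := mul_comm _ _
  · obtain ⟨j, hj⟩ := Finite.exists_min fun i => 8 / (bU i + bL i) ^ 2
    have hmj : (⨅ i, 8 / (bU i + bL i) ^ 2) = 8 / (bU j + bL j) ^ 2 :=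
      le_antisymm (ciInf_le hbdd j) (le_ciInf hj)
    refine ⟨(WithLp.toLp 2 (fun i => (bU i - bL i) / 2) : EuclideanSpace ℝ (Fin n)), ?_, ?_⟩
    · intro i
      constructor
      · show -bL i < (bU i - bL i) / 2
        nlinarith [hbU i, hbL i]
      · show (bU i - bL i) / 2 < bU i
        nlinarith [hbU i, hbL i]
    · refine ⟨EuclideanSpace.single j 1, by simp, ?_⟩
      rw [hmj, Finset.sum_eq_single j]
      · have h1 : bU j - (bU j - bL j) / 2 = (bU j + bL j) / 2 := by ring
        have h2 : bL j + (bU j - bL j) / 2 = (bU j + bL j) / 2 := by ring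
        show (EuclideanSpace.single j (1:ℝ) j) ^ 2 *
          (1 / (bU j - (bU j - bL j) / 2) ^ 2 + 1 / (bL j + (bU j - bL j) / 2) ^ 2)
            = 8 / (bU j + bL j) ^ 2
        rw [h1, h2, EuclideanSpace.single_apply]
        have hp : (0:ℝ) < bU j + bL j := by linarith [hbU j, hbL j]
        simp only [if_pos rfl, one_pow, one_mul]
        field_simp
        norm_num
      · intro i _ hij
        have : (EuclideanSpace.single j (1:ℝ)) i = 0 := by
          rw [EuclideanSpace.single_apply, if_neg hij]
        rw [this]; ring
      · intro h; exact absurd (Finset.mem_univ j) h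
end

section
/- Let H be a real symmetric positive-definite n×n matrix, μ > 0, and let b̄_i > 0, b̲_i > 0 for i = 1, …, n define the open box Ω = {u ∈ ℝ^n : −b̲_i < u_i < b̄_i}. Let B(u) = ∑_i[−ln(b̄_i − u_i) + ln(b̄_i) − u_i/b̄_i − ln(b̲_i + u_i) + ln(b̲_i) + u_i/b̲_i] be the gradient-recentered log-barrier of the box, and set m = min_i 8/(b̄_i + b̲_i)². For θ_x, θ_y ∈ ℝ^n suppose U_x ∈ Ω minimizes u ↦ (1/2)⟨u, Hu⟩ − ⟨θ_x, u⟩ + μB(u) over Ω and U_y ∈ Ω minimizes u ↦ (1/2)⟨u, Hu⟩ − ⟨θ_y, u⟩ + μB(u) over Ω. Then ⟨U_x − U_y, (H + μmI)(U_x − U_y)⟩ ≤ ⟨U_x − U_y, θ_x − θ_y⟩. -/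
open RealInnerProductSpace Matrix


-- algebraic key: 8/(a+b)^2 ≤ 1/a^2 + 1/b^2
lemma aux_alg {a b : ℝ} (ha : 0 < a) (hb : 0 < b) :
    8 / (a + b) ^ 2 ≤ a⁻¹ ^ 2 + b⁻¹ ^ 2 := by
  have h : (a ^ 2)⁻¹ + (b ^ 2)⁻¹ = (b ^ 2 + a ^ 2) / (a ^ 2 * b ^ 2) := by
    field_simp
  rw [inv_pow, inv_pow, h, div_le_div_iff₀ (by positivity) (by positivity)]
  nlinarith [sq_nonneg (a - b), sq_nonneg (a*a - b*b), mul_pos ha hb, sq_nonneg (a*b)]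

lemma aux_convex {p q c : ℝ} (hp : 0 < p) (hq : 0 < q) (hc : c ≤ 8 / (q + p) ^ 2) :
    ConvexOn ℝ (Set.Ioo (-p) q)
      (fun t => -Real.log (q - t) - Real.log (p + t) - c / 2 * t ^ 2) := by
  have hint : interior (Set.Ioo (-p) q) = Set.Ioo (-p) q := (isOpen_Ioo).interior_eq
  refine convexOn_of_hasDerivWithinAt2_nonneg (f' := fun t => (q - t)⁻¹ - (p + t)⁻¹ - c * t)
    (f'' := fun t => (q - t)⁻¹ ^ 2 + (p + t)⁻¹ ^ 2 - c) (convex_Ioo _ _) ?_ ?_ ?_ ?_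
  case _ =>
    intro t ht
    have h1 : q - t ≠ 0 := by have := ht.2; intro h; linarith [sub_pos.2 ht.2, h]
    have h2 : p + t ≠ 0 := by have := ht.1; intro h; linarith
    have d1 : HasDerivAt (fun t => Real.log (q - t)) (-1 / (q - t)) t :=
      ((hasDerivAt_id t).const_sub q).log h1
    have d2 : HasDerivAt (fun t => Real.log (p + t)) (1 / (p + t)) t :=
      ((hasDerivAt_id t).const_add p).log h2
    have d3 : HasDerivAt (fun t => c / 2 * t ^ 2) (c * t) t := by
      have := (hasDerivAt_pow 2 t).const_mul (c / 2)
      refine this.congr_deriv ?_; push_cast; ring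
    exact ((d1.neg.sub d2).sub d3).continuousAt.continuousWithinAt
  case _ =>
    intro t ht
    rw [hint] at ht ⊢
    have h1 : q - t ≠ 0 := by intro h; have := ht.2; linarith
    have h2 : p + t ≠ 0 := by intro h; have := ht.1; linarith
    have d1 : HasDerivAt (fun t => Real.log (q - t)) (-1 / (q - t)) t :=
      ((hasDerivAt_id t).const_sub q).log h1
    have d2 : HasDerivAt (fun t => Real.log (p + t)) (1 / (p + t)) t :=
      ((hasDerivAt_id t).const_add p).log h2
    have d3 : HasDerivAt (fun t => c / 2 * t ^ 2) (c * t) t := by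
      have := (hasDerivAt_pow 2 t).const_mul (c / 2)
      refine this.congr_deriv ?_; push_cast; ring
    have h := ((d1.neg.sub d2).sub d3)
    have : HasDerivAt (fun t => -Real.log (q - t) - Real.log (p + t) - c / 2 * t ^ 2)
        ((q - t)⁻¹ - (p + t)⁻¹ - c * t) t := by
      refine h.congr_deriv ?_; field_simp; try ring
    exact this.hasDerivWithinAt
  case _ =>
    intro t ht
    rw [hint] at ht
    have h1 : q - t ≠ 0 := by intro h; have := ht.2; linarith
    have h2 : p + t ≠ 0 := by intro h; have := ht.1; linarith
    have d1 : HasDerivAt (fun t => (q - t)⁻¹) (-(-1) / (q - t) ^ 2) t :=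
      ((hasDerivAt_id t).const_sub q).inv h1
    have d2 : HasDerivAt (fun t => (p + t)⁻¹) (-1 / (p + t) ^ 2) t :=
      ((hasDerivAt_id t).const_add p).inv h2
    have d3 : HasDerivAt (fun t => c * t) c t := by
      simpa using (hasDerivAt_id t).const_mul c
    have h := ((d1.sub d2).sub d3)
    have : HasDerivAt (fun t => (q - t)⁻¹ - (p + t)⁻¹ - c * t)
        ((q - t)⁻¹ ^ 2 + (p + t)⁻¹ ^ 2 - c) t := by
      refine h.congr_deriv ?_; field_simp; try ring; try ring
    exact this.hasDerivWithinAt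
  case _ =>
    intro t ht
    rw [hint] at ht
    have h1 : 0 < q - t := by linarith [ht.2]
    have h2 : 0 < p + t := by linarith [ht.1]
    have key := aux_alg h1 h2
    have : q - t + (p + t) = q + p := by ring
    rw [this] at key
    linarith


-- per-coordinate barrier-term strong convexity combination
lemma aux_term {p q c x y l : ℝ} (hp : 0 < p) (hq : 0 < q) (hc : c ≤ 8 / (q + p) ^ 2)
    (hx : x ∈ Set.Ioo (-p) q) (hy : y ∈ Set.Ioo (-p) q) (hl0 : 0 ≤ l) (hl1 : l ≤ 1) :
    -Real.log (q - ((1 - l) * x + l * y)) + Real.log q - ((1 - l) * x + l * y) / q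
      - Real.log (p + ((1 - l) * x + l * y)) + Real.log p + ((1 - l) * x + l * y) / p ≤
    (1 - l) * (-Real.log (q - x) + Real.log q - x / q - Real.log (p + x) + Real.log p + x / p)
      + l * (-Real.log (q - y) + Real.log q - y / q - Real.log (p + y) + Real.log p + y / p)
      - c / 2 * l * (1 - l) * (x - y) ^ 2 := by
  have hco := (aux_convex hp hq hc).2 hx hy (by linarith : (0:ℝ) ≤ 1 - l) hl0 (by ring)
  simp only [smul_eq_mul] at hco
  have e1 : ((1 - l) * x + l * y) / q = (1 - l) * (x / q) + l * (y / q) := by ring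
  have e2 : ((1 - l) * x + l * y) / p = (1 - l) * (x / p) + l * (y / p) := by ring
  have e3 : c / 2 * ((1 - l) * x + l * y) ^ 2
      = (1 - l) * (c / 2 * x ^ 2) + l * (c / 2 * y ^ 2) - c / 2 * l * (1 - l) * (x - y) ^ 2 := by
    ring
  nlinarith [hco]

lemma aux_small {K C : ℝ} (h : ∀ l : ℝ, 0 < l → l ≤ 1 → 0 ≤ K + l * C) : 0 ≤ K := by
  by_contra hK
  push_neg at hK
  rcases le_or_gt C 0 with hC | hC
  · linarith [h 1 one_pos le_rfl]
  · have hl0 : 0 < min 1 (-K / (2 * C)) := lt_min one_pos (div_pos (by linarith) (by linarith))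
    have hmain := h _ hl0 (min_le_left _ _)
    have h2 : min 1 (-K / (2 * C)) * C ≤ (-K / (2 * C)) * C :=
      mul_le_mul_of_nonneg_right (min_le_right _ _) hC.le
    have h3 : (-K / (2 * C)) * C = -K / 2 := by field_simp
    linarith

lemma aux_keydir {n : ℕ}
    (H : Matrix (Fin n) (Fin n) ℝ) (hHsym : H.IsSymm)
    (μ : ℝ) (hμ : 0 < μ)
    (bU bL : Fin n → ℝ) (hbU : ∀ i, 0 < bU i) (hbL : ∀ i, 0 < bL i)
    (m : ℝ) (hm : ∀ i, m ≤ 8 / (bU i + bL i) ^ 2)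
    (θ X Y : EuclideanSpace ℝ (Fin n))
    (hX : ∀ i, -bL i < X i ∧ X i < bU i) (hY : ∀ i, -bL i < Y i ∧ Y i < bU i)
    (hmin : ∀ u : EuclideanSpace ℝ (Fin n), (∀ i, -bL i < u i ∧ u i < bU i) →
      (1 / 2) * ⟪X, Matrix.toEuclideanLin H X⟫ - ⟪θ, X⟫ +
          μ * ∑ i, (-Real.log (bU i - X i) + Real.log (bU i) - X i / bU i -
            Real.log (bL i + X i) + Real.log (bL i) + X i / bL i) ≤
        (1 / 2) * ⟪u, Matrix.toEuclideanLin H u⟫ - ⟪θ, u⟫ +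
          μ * ∑ i, (-Real.log (bU i - u i) + Real.log (bU i) - u i / bU i -
            Real.log (bL i + u i) + Real.log (bL i) + u i / bL i)) :
    0 ≤ ⟪Matrix.toEuclideanLin H X, Y - X⟫ - ⟪θ, Y - X⟫
      + μ * ((∑ i, (-Real.log (bU i - Y i) + Real.log (bU i) - Y i / bU i -
            Real.log (bL i + Y i) + Real.log (bL i) + Y i / bL i))
           - (∑ i, (-Real.log (bU i - X i) + Real.log (bU i) - X i / bU i -
            Real.log (bL i + X i) + Real.log (bL i) + X i / bL i)))
      - μ * m / 2 * ∑ i, (X i - Y i) ^ 2 := by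
  have hherm : H.IsHermitian := by
    show Hᴴ = H
    ext i j
    have := congrFun (congrFun hHsym i) j
    simpa [Matrix.conjTranspose_apply, Matrix.transpose_apply] using this
  have hsymA := (Matrix.isHermitian_iff_isSymmetric.mp hherm)
  set A := Matrix.toEuclideanLin H with hA
  set v : EuclideanSpace ℝ (Fin n) := Y - X with hv
  set BX := ∑ i, (-Real.log (bU i - X i) + Real.log (bU i) - X i / bU i -
            Real.log (bL i + X i) + Real.log (bL i) + X i / bL i) with hBX
  set BY := ∑ i, (-Real.log (bU i - Y i) + Real.log (bU i) - Y i / bU i -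
            Real.log (bL i + Y i) + Real.log (bL i) + Y i / bL i) with hBY
  set S := ∑ i, (X i - Y i) ^ 2 with hS
  refine aux_small (C := (1 / 2) * ⟪v, A v⟫ + μ * m / 2 * S) ?_
  intro l hl0 hl1
  set z : EuclideanSpace ℝ (Fin n) := X + l • v with hz
  have hzi : ∀ i, z i = (1 - l) * X i + l * Y i := by
    intro i
    have : z i = X i + l * (Y i - X i) := by
      simp [hz, hv]
    rw [this]; ring
  have hzbox : ∀ i, -bL i < z i ∧ z i < bU i := by
    intro i
    rw [hzi i]
    constructor
    · nlinarith [(hX i).1, (hY i).1]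
    · nlinarith [(hX i).2, (hY i).2]
  have hbar : (∑ i, (-Real.log (bU i - z i) + Real.log (bU i) - z i / bU i -
            Real.log (bL i + z i) + Real.log (bL i) + z i / bL i))
      ≤ BX + l * (BY - BX) - m / 2 * l * (1 - l) * S := by
    have step : ∀ i ∈ Finset.univ, (-Real.log (bU i - z i) + Real.log (bU i) - z i / bU i -
            Real.log (bL i + z i) + Real.log (bL i) + z i / bL i)
        ≤ (1 - l) * (-Real.log (bU i - X i) + Real.log (bU i) - X i / bU i -
            Real.log (bL i + X i) + Real.log (bL i) + X i / bL i)
          + l * (-Real.log (bU i - Y i) + Real.log (bU i) - Y i / bU i -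
            Real.log (bL i + Y i) + Real.log (bL i) + Y i / bL i)
          - m / 2 * l * (1 - l) * (X i - Y i) ^ 2 := by
      intro i _
      rw [hzi i]
      exact aux_term (hbL i) (hbU i) (hm i) ⟨(hX i).1, (hX i).2⟩ ⟨(hY i).1, (hY i).2⟩
        hl0.le hl1
    calc (∑ i, (-Real.log (bU i - z i) + Real.log (bU i) - z i / bU i -
            Real.log (bL i + z i) + Real.log (bL i) + z i / bL i))
        ≤ ∑ i, ((1 - l) * (-Real.log (bU i - X i) + Real.log (bU i) - X i / bU i -
            Real.log (bL i + X i) + Real.log (bL i) + X i / bL i)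
          + l * (-Real.log (bU i - Y i) + Real.log (bU i) - Y i / bU i -
            Real.log (bL i + Y i) + Real.log (bL i) + Y i / bL i)
          - m / 2 * l * (1 - l) * (X i - Y i) ^ 2) := Finset.sum_le_sum step
      _ = (1 - l) * BX + l * BY - m / 2 * l * (1 - l) * S := by
          rw [hBX, hBY, hS]
          simp only [Finset.sum_sub_distrib, Finset.sum_add_distrib, ← Finset.mul_sum]
      _ = BX + l * (BY - BX) - m / 2 * l * (1 - l) * S := by ring
  have hAz : A z = A X + l • A v := by
    rw [hz]; simp only [map_add, LinearMap.map_smul]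
  have e1 : ⟪X, A v⟫ = ⟪A X, v⟫ := (hsymA X v).symm
  have e2 : ⟪v, A X⟫ = ⟪A X, v⟫ := real_inner_comm _ _
  have hquad : ⟪z, A z⟫ = ⟪X, A X⟫ + 2 * l * ⟪A X, v⟫ + l ^ 2 * ⟪v, A v⟫ := by
    rw [hz, hAz]
    rw [inner_add_left, inner_add_right, inner_add_right, real_inner_smul_left,
      real_inner_smul_left, real_inner_smul_right, real_inner_smul_right, e1, e2]
    ring
  have hlin : ⟪θ, z⟫ = ⟪θ, X⟫ + l * ⟪θ, v⟫ := by
    rw [hz, inner_add_right, real_inner_smul_right]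
  have hmz := hmin z hzbox
  have hb2 : μ * (∑ i, (-Real.log (bU i - z i) + Real.log (bU i) - z i / bU i -
            Real.log (bL i + z i) + Real.log (bL i) + z i / bL i))
      ≤ μ * (BX + l * (BY - BX) - m / 2 * l * (1 - l) * S) :=
    mul_le_mul_of_nonneg_left hbar hμ.le
  have h0 : 0 ≤ l * ((⟪A X, v⟫ - ⟪θ, v⟫ + μ * (BY - BX) - μ * m / 2 * S)
      + l * ((1 / 2) * ⟪v, A v⟫ + μ * m / 2 * S)) := by
    have key : l * ((⟪A X, v⟫ - ⟪θ, v⟫ + μ * (BY - BX) - μ * m / 2 * S)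
        + l * ((1 / 2) * ⟪v, A v⟫ + μ * m / 2 * S))
        = ((1 / 2) * ⟪z, A z⟫ - ⟪θ, z⟫ + μ * (BX + l * (BY - BX) - m / 2 * l * (1 - l) * S))
          - ((1 / 2) * ⟪X, A X⟫ - ⟪θ, X⟫ + μ * BX) := by
      rw [hquad, hlin]; ring
    rw [key]
    linarith [hmz, hb2]
  exact (mul_nonneg_iff_of_pos_left hl0).mp h0

/-- Theorem 3 combined with Appendix A: for box input constraints `-b̲ᵢ < uᵢ < b̄ᵢ` with the
gradient-recentered log-barrier
`B(u) = ∑ᵢ [-ln(b̄ᵢ-uᵢ) + ln b̄ᵢ - uᵢ/b̄ᵢ - ln(b̲ᵢ+uᵢ) + ln b̲ᵢ + uᵢ/b̲ᵢ]`,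
the barrier-MPC map is slope-restricted on `[0, (H + μmI)⁻¹]` with
`m = minᵢ 8/(b̄ᵢ+b̲ᵢ)²`. -/
theorem barrierMPC_box_slope_restricted {n : ℕ} (hn : 0 < n)
    (H : Matrix (Fin n) (Fin n) ℝ) (hH : H.PosDef) (hHsym : H.IsSymm)
    (μ : ℝ) (hμ : 0 < μ)
    (bU bL : Fin n → ℝ) (hbU : ∀ i, 0 < bU i) (hbL : ∀ i, 0 < bL i)
    (θx θy Ux Uy : EuclideanSpace ℝ (Fin n))
    (hUx : ∀ i, -bL i < Ux i ∧ Ux i < bU i)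
    (hUy : ∀ i, -bL i < Uy i ∧ Uy i < bU i)
    (hminx : ∀ u : EuclideanSpace ℝ (Fin n), (∀ i, -bL i < u i ∧ u i < bU i) →
      (1 / 2) * ⟪Ux, Matrix.toEuclideanLin H Ux⟫ - ⟪θx, Ux⟫ +
          μ * ∑ i, (-Real.log (bU i - Ux i) + Real.log (bU i) - Ux i / bU i -
            Real.log (bL i + Ux i) + Real.log (bL i) + Ux i / bL i) ≤
        (1 / 2) * ⟪u, Matrix.toEuclideanLin H u⟫ - ⟪θx, u⟫ +
          μ * ∑ i, (-Real.log (bU i - u i) + Real.log (bU i) - u i / bU i -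
            Real.log (bL i + u i) + Real.log (bL i) + u i / bL i))
    (hminy : ∀ u : EuclideanSpace ℝ (Fin n), (∀ i, -bL i < u i ∧ u i < bU i) →
      (1 / 2) * ⟪Uy, Matrix.toEuclideanLin H Uy⟫ - ⟪θy, Uy⟫ +
          μ * ∑ i, (-Real.log (bU i - Uy i) + Real.log (bU i) - Uy i / bU i -
            Real.log (bL i + Uy i) + Real.log (bL i) + Uy i / bL i) ≤
        (1 / 2) * ⟪u, Matrix.toEuclideanLin H u⟫ - ⟪θy, u⟫ +
          μ * ∑ i, (-Real.log (bU i - u i) + Real.log (bU i) - u i / bU i -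
            Real.log (bL i + u i) + Real.log (bL i) + u i / bL i)) :
    ⟪Ux - Uy, Matrix.toEuclideanLin
        (H + (μ * ⨅ i, 8 / (bU i + bL i) ^ 2) • (1 : Matrix (Fin n) (Fin n) ℝ))
        (Ux - Uy)⟫ ≤
      ⟪Ux - Uy, θx - θy⟫ := by
  have : Nonempty (Fin n) := ⟨⟨0, hn⟩⟩
  set m : ℝ := ⨅ i, 8 / (bU i + bL i) ^ 2 with hm'
  have hm : ∀ i, m ≤ 8 / (bU i + bL i) ^ 2 := fun i =>
    ciInf_le (Set.Finite.bddBelow (Set.finite_range _)) i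
  have h1 := aux_keydir H hHsym μ hμ bU bL hbU hbL m hm θx Ux Uy hUx hUy hminx
  have h2 := aux_keydir H hHsym μ hμ bU bL hbU hbL m hm θy Uy Ux hUy hUx hminy
  have hSsym : (∑ i, (Uy i - Ux i) ^ 2) = ∑ i, (Ux i - Uy i) ^ 2 :=
    Finset.sum_congr rfl (fun i _ => by ring)
  rw [hSsym] at h2
  set A := Matrix.toEuclideanLin H with hA
  set d : EuclideanSpace ℝ (Fin n) := Ux - Uy with hd
  set S := ∑ i, (Ux i - Uy i) ^ 2 with hS
  -- expand the goal LHS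
  have hmap : Matrix.toEuclideanLin (H + (μ * m) • (1 : Matrix (Fin n) (Fin n) ℝ)) d
      = A d + (μ * m) • d := by
    have hone : Matrix.toEuclideanLin (1 : Matrix (Fin n) (Fin n) ℝ) d = d := by
      ext i
      simp [Matrix.toEuclideanLin_apply, Matrix.one_mulVec]
    rw [map_add, LinearEquiv.map_smulₛₗ]
    simp only [LinearMap.add_apply, LinearMap.smul_apply, RingHom.id_apply]
    rw [hone, hA]
  have hdd : ⟪d, d⟫ = S := by
    rw [hS, PiLp.inner_apply]
    refine Finset.sum_congr rfl (fun i _ => ?_)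
    simp [hd, RCLike.inner_apply]
  have hL : ⟪d, Matrix.toEuclideanLin
      (H + (μ * m) • (1 : Matrix (Fin n) (Fin n) ℝ)) d⟫ = ⟪d, A d⟫ + (μ * m) * S := by
    rw [hmap, inner_add_right, real_inner_smul_right, hdd]
  rw [hL]
  -- inner product identities
  have e1 : ⟪A Ux, Uy - Ux⟫ + ⟪A Uy, Ux - Uy⟫ = -⟪d, A d⟫ := by
    rw [hd]
    simp only [inner_sub_left, inner_sub_right, map_sub]
    rw [real_inner_comm (A Ux) Uy, real_inner_comm (A Uy) Ux,
      real_inner_comm (A Ux) Ux, real_inner_comm (A Uy) Uy]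
    ring
  have e2 : ⟪θx, Uy - Ux⟫ + ⟪θy, Ux - Uy⟫ = -⟪d, θx - θy⟫ := by
    rw [hd]
    simp only [inner_sub_left, inner_sub_right]
    rw [real_inner_comm θx Uy, real_inner_comm θx Ux, real_inner_comm θy Ux,
      real_inner_comm θy Uy]
    ring
  linarith [h1, h2, e1, e2]
end
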